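/- (Two-sided regulator.) Fix a < b in ℝ and let f : ℝ₊ → ℝ be continuous with f(0) ∈ [a,b]. There exists a unique pair of continuous functions (l, u) from ℝ₊ to ℝ such that (i) X(t) := f(t) + l(t) − u(t) ∈ [a,b] for all t ≥ 0; (ii) l(0) = u(0) = 0 and both l and u are non-decreasing; (iii) ∫₀^∞ 1_{X(t) > a} dl(t) = ∫₀^∞ 1_{X(t) < b} du(t) = 0. -/

import Mathlib

open MeasureTheory ProbabilityTheory Filter Set
open scoped NNReal ENNReal Topology

noncomputable section

/-- The space `ℝ̈ = (-∞,0⁻] ∪ [0⁺,+∞)`, the disjoint union of two half-lines.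
A point is encoded by the half-line it belongs to (`side = true` for the positive one)
and its distance `rad` to the origin. -/
structure Rddot where
  side : Bool
  rad : ℝ≥0

namespace Rddot

/-- The natural projection `π̈ : ℝ̈ → ℝ` (identifying `0⁺` and `0⁻` with `0`). -/
def val (x : Rddot) : ℝ := if x.side then (x.rad : ℝ) else -(x.rad : ℝ)

/-- An auxiliary `{0,1}`-valued marker of the side, used to define the metric
`d(x,y) = |x - y| + 1_{xy ≤ 0}` on `ℝ̈`. -/
def ind (x : Rddot) : ℝ := if x.side then 0 else 1

/-- `|x|`, the distance of `x ∈ ℝ̈` to the origin. -/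
def abs (x : Rddot) : ℝ := (x.rad : ℝ)

instance : MeasurableSpace Rddot := MeasurableSpace.comap (fun x => (x.side, x.rad)) inferInstance

lemma eq_of_val_ind {x y : Rddot} (hv : x.val = y.val) (hi : x.ind = y.ind) : x = y := by
  rcases x with ⟨bx, rx⟩
  rcases y with ⟨by', ry⟩
  cases bx <;> cases by' <;> simp_all [val, ind]

/-- The metric `d(x,y) = |x-y| + 1_{xy ≤ 0}` on `ℝ̈`: the distance between the real
projections, plus `1` if the two points lie on different half-lines. -/
noncomputable instance : MetricSpace Rddot where
  dist x y := |x.val - y.val| + |x.ind - y.ind|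
  dist_self x := by simp
  dist_comm x y := by simp [abs_sub_comm]
  dist_triangle x y z := by
    show |x.val - z.val| + |x.ind - z.ind| ≤
      (|x.val - y.val| + |x.ind - y.ind|) + (|y.val - z.val| + |y.ind - z.ind|)
    have h1 : |x.val - z.val| ≤ |x.val - y.val| + |y.val - z.val| := abs_sub_le _ _ _
    have h2 : |x.ind - z.ind| ≤ |x.ind - y.ind| + |y.ind - z.ind| := abs_sub_le _ _ _
    linarith
  eq_of_dist_eq_zero := by
    intro x y h
    have h' : |x.val - y.val| + |x.ind - y.ind| = 0 := h
    have h1 : |x.val - y.val| = 0 := by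
      have := abs_nonneg (x.val - y.val)
      have := abs_nonneg (x.ind - y.ind)
      linarith
    have h2 : |x.ind - y.ind| = 0 := by
      have := abs_nonneg (x.val - y.val)
      have := abs_nonneg (x.ind - y.ind)
      linarith
    exact eq_of_val_ind (sub_eq_zero.mp (abs_eq_zero.mp h1))
      (sub_eq_zero.mp (abs_eq_zero.mp h2))

end Rddot

/-- A path indexed by `ℝ≥0` is càdlàg: right-continuous with left limits. -/
def CadlagOn {E : Type*} [TopologicalSpace E] (f : ℝ≥0 → E) : Prop :=
  (∀ t : ℝ≥0, ContinuousWithinAt f (Set.Ici t) t) ∧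
  (∀ t : ℝ≥0, 0 < t → ∃ l : E, Filter.Tendsto f (nhdsWithin t (Set.Iio t)) (nhds l))

/-- The natural filtration of a process `X`: `σ(X_u, u ≤ t)`. -/
def natSigma {Ω E : Type*} [MeasurableSpace E] (X : ℝ≥0 → Ω → E) (t : ℝ≥0) :
    MeasurableSpace Ω :=
  ⨆ u ∈ Set.Iic t, MeasurableSpace.comap (X u) inferInstance

/-- `M` is a martingale with respect to the filtration generated by the process `X`. -/
def IsMartingaleNat {Ω E : Type*} [MeasurableSpace Ω] [MeasurableSpace E] (P : Measure Ω)
    (X : ℝ≥0 → Ω → E) (M : ℝ≥0 → Ω → ℝ) : Prop :=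
  (∀ t, Integrable (M t) P) ∧
  (∀ t, Measurable[natSigma X t] (M t)) ∧
  ∀ s t : ℝ≥0, s ≤ t → P[M t|natSigma X s] =ᵐ[P] M s

/-- `X` is a Markov process (with respect to its natural filtration). -/
def IsMarkovProc {Ω E : Type*} [MeasurableSpace Ω] [MeasurableSpace E] (P : Measure Ω)
    (X : ℝ≥0 → Ω → E) : Prop :=
  ∀ s t : ℝ≥0, s ≤ t → ∀ g : E → ℝ, Measurable g → (∀ x, |g x| ≤ 1) →
    P[(fun ω => g (X t ω))|natSigma X s]
      =ᵐ[P] P[(fun ω => g (X t ω))|MeasurableSpace.comap (X s) inferInstance]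

/-- The domain `𝒟^γ` of the generator of partially reflected Brownian motion with
permeability `γ ∈ [0,∞]`: functions on `ℝ̈` vanishing at infinity, twice continuously
differentiable on each half-line (`pos` and `neg` are the restrictions to `[0⁺,∞)` and
`(-∞,0⁻]`, the latter reparametrized by the distance to the origin), and satisfying the
transmission condition `f'(0⁻) = f'(0⁺) = γ (f(0⁺) - f(0⁻))` (for `γ = ∞` this means
`f'(0⁻) = f'(0⁺)` and `f(0⁺) = f(0⁻)`). -/
structure DomGamma (γ : ℝ≥0∞) where
  pos : ℝ → ℝ
  neg : ℝ → ℝ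
  contDiff_pos : ContDiffOn ℝ 2 pos (Set.Ici 0)
  contDiff_neg : ContDiffOn ℝ 2 neg (Set.Ici 0)
  vanish_pos : Filter.Tendsto pos Filter.atTop (nhds 0)
  vanish_neg : Filter.Tendsto neg Filter.atTop (nhds 0)
  /-- `f'(0⁻) = f'(0⁺)`; note that `f'(0⁻) = - neg'(0)` since `neg` is parametrized by
  the distance to the origin. -/
  deriv_eq : -(derivWithin neg (Set.Ici 0) 0) = derivWithin pos (Set.Ici 0) 0
  /-- `f'(0⁺) = γ (f(0⁺) - f(0⁻))`, and for `γ = ∞`, `f(0⁺) = f(0⁻)`. -/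
  transmission : if γ = ⊤ then pos 0 = neg 0
    else derivWithin pos (Set.Ici 0) 0 = γ.toReal * (pos 0 - neg 0)

namespace DomGamma

variable {γ : ℝ≥0∞}

/-- Evaluation of an element of `𝒟^γ` as a function on `ℝ̈`. -/
def eval (f : DomGamma γ) (x : Rddot) : ℝ := if x.side then f.pos x.abs else f.neg x.abs

/-- The second derivative `f''` of `f ∈ 𝒟^γ` at a point of `ℝ̈` (one-sided at `0⁺`, `0⁻`). -/
def d2 (f : DomGamma γ) (x : Rddot) : ℝ :=
  if x.side then iteratedDerivWithin 2 f.pos (Set.Ici 0) x.abs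
  else iteratedDerivWithin 2 f.neg (Set.Ici 0) x.abs

end DomGamma

/-- The generator `L^γ f = (σ²/2) f''` on `𝒟^γ`. -/
def generator (γ : ℝ≥0∞) (σ2 : ℝ) (f : DomGamma γ) (x : Rddot) : ℝ := σ2 / 2 * f.d2 x

/-- `X` is a solution of the martingale problem associated with `L^γ` (with `σ² = σ2`):
a càdlàg `ℝ̈`-valued Markov process such that for every `f ∈ 𝒟^γ`,
`f(X_t) - ∫₀ᵗ L^γ f(X_s) ds` is a martingale for the filtration generated by `X`. -/
def SolvesMP {Ω : Type*} [MeasurableSpace Ω] (γ : ℝ≥0∞) (σ2 : ℝ) (P : Measure Ω)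
    (X : ℝ≥0 → Ω → Rddot) : Prop :=
  (∀ t, Measurable (X t)) ∧
  (∀ᵐ ω ∂P, CadlagOn fun t => X t ω) ∧
  IsMarkovProc P X ∧
  ∀ f : DomGamma γ, IsMartingaleNat P X
    (fun t ω => f.eval (X t ω) - ∫ s in (0:ℝ)..(t:ℝ), generator γ σ2 f (X s.toNNReal ω))

/-- The law of the path of a process, as a measure on the (Skorokhod) path space. -/
def pathLaw {Ω E : Type*} [MeasurableSpace Ω] [MeasurableSpace E] (P : Measure Ω)
    (X : ℝ≥0 → Ω → E) : Measure (ℝ≥0 → E) := P.map fun ω t => X t ω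

/-- `B` is a Brownian motion started from `x0` with variance parameter `σ2`:
continuous paths and independent, stationary Gaussian increments. -/
def IsBrownianMotion {Ω : Type*} [MeasurableSpace Ω] (P : Measure Ω) (B : ℝ≥0 → Ω → ℝ)
    (x0 : ℝ) (σ2 : ℝ≥0) : Prop :=
  (∀ t, Measurable (B t)) ∧
  (∀ᵐ ω ∂P, B 0 ω = x0) ∧
  (∀ᵐ ω ∂P, Continuous fun t => B t ω) ∧
  (∀ s t : ℝ≥0, s ≤ t →
    P.map (fun ω => B t ω - B s ω) = gaussianReal 0 (σ2 * (t - s))) ∧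
  ∀ (n : ℕ) (τ : Fin (n+1) → ℝ≥0), Monotone τ →
    iIndepFun
      (fun i : Fin n => fun ω => B (τ i.succ) ω - B (τ i.castSucc) ω) P

/-- Time spent by the path `g` strictly above level `c` in absolute value, up to time `u`. -/
def occAbove (c : ℝ) (g : ℝ≥0 → ℝ) (u : ℝ≥0) : ℝ :=
  ∫ s in (0:ℝ)..(u:ℝ), if c < |g s.toNNReal| then (1:ℝ) else 0

/-- Time spent by the path `g` at levels `≤ c` in absolute value, up to time `u`. -/
def occBelow (c : ℝ) (g : ℝ≥0 → ℝ) (u : ℝ≥0) : ℝ :=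
  ∫ s in (0:ℝ)..(u:ℝ), if |g s.toNNReal| ≤ c then (1:ℝ) else 0

/-- The time change `τ(t) = inf{u > 0 : ∫₀ᵘ 1_{|g_s| > c} ds > t}`. -/
def tauTC (c : ℝ) (g : ℝ≥0 → ℝ) (t : ℝ≥0) : ℝ≥0 := sInf {u : ℝ≥0 | (t:ℝ) < occAbove c g u}

/-- The time change `θ(t) = inf{u > 0 : ∫₀ᵘ 1_{|g_s| ≤ c} ds > t}`. -/
def thetaTC (c : ℝ) (g : ℝ≥0 → ℝ) (t : ℝ≥0) : ℝ≥0 := sInf {u : ℝ≥0 | (t:ℝ) < occBelow c g u}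

/-- The gluing map `r : ℝ → ℝ̈`: it maps `[1/(2γ),∞)` to `[0⁺,∞)` and `(-∞,-1/(2γ)]`
to `(-∞,0⁻]` by translation, `[0,1/(2γ))` to `0⁺` and `(-1/(2γ),0)` to `0⁻`. -/
def rmap (γ : ℝ) (z : ℝ) : Rddot :=
  if 0 ≤ z then ⟨true, (z - 1/(2*γ)).toNNReal⟩ else ⟨false, (-z - 1/(2*γ)).toNNReal⟩

/-- The right inverse `r⁻¹(x) = x + sign(x)/(2γ)` of `r`. -/
def rinv (γ : ℝ) (x : Rddot) : ℝ := x.val + (if x.side then 1/(2*γ) else -(1/(2*γ)))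

/-- The "speed and scale" construction: `X_t = r(B_{τ(t)})`. -/
def speedScale {Ω : Type*} (γ : ℝ) (B : ℝ≥0 → Ω → ℝ) (t : ℝ≥0) (ω : Ω) : Rddot :=
  rmap γ (B (tauTC (1/(2*γ)) (fun s => B s ω) t) ω)

/-- The Gaussian kernel `G_t(z) = (2πt)^{-1/2} exp(-z²/(2t))`. -/
def gaussK (t z : ℝ) : ℝ := (Real.sqrt (2 * Real.pi * t))⁻¹ * Real.exp (-(z^2) / (2*t))

/-- `∫₀^∞ e^{-2γl} G_t(a+b+l) dl`. -/
def barrierInt (γ t a b : ℝ) : ℝ :=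
  ∫ l in Set.Ioi (0:ℝ), Real.exp (-(2*γ*l)) * gaussK t (a + b + l)

/-- The transition density of partially reflected Brownian motion with permeability `γ`,
as a function of `t`, `a = |x|`, `b = |y|` and of whether `x` and `y` lie on the same
half-line. -/
def transDens (γ t a b : ℝ) (same : Bool) : ℝ :=
  if same then gaussK t (a - b) + gaussK t (a + b) - 2*γ*barrierInt γ t a b
  else 2*γ*barrierInt γ t a b

/-- `(1/(2ε)) ∫₀ᵗ 1_{|h_s| ≤ ε} ds`, the approximation of the local time at the origin. -/
def localTimeApprox (h : ℝ≥0 → ℝ) (t : ℝ≥0) (ε : ℝ) : ℝ := (1/(2*ε)) * occBelow ε h t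

/-- `L` is the local time at the origin of the path `h`:
`L_t = lim_{ε↓0} (1/(2ε)) ∫₀ᵗ 1_{|h_s| ≤ ε} ds`. -/
def IsLocalTimePath (h : ℝ≥0 → ℝ) (L : ℝ≥0 → ℝ) : Prop :=
  ∀ t : ℝ≥0, Filter.Tendsto (fun ε => localTimeApprox h t ε)
    (nhdsWithin 0 (Set.Ioi 0)) (nhds (L t))

/-- `μ` is the law (on path space) of the absolute value of a Brownian motion with
variance parameter `σ2` started from `a`, i.e. of reflected Brownian motion. -/
def ReflBMLaw (a : ℝ) (σ2 : ℝ≥0) (μ : Measure (ℝ≥0 → ℝ)) : Prop :=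
  ∃ (Ω' : Type) (m' : MeasurableSpace Ω') (P' : @Measure Ω' m') (B' : ℝ≥0 → Ω' → ℝ),
    @IsProbabilityMeasure Ω' m' P' ∧ @IsBrownianMotion Ω' m' P' B' a σ2 ∧
    μ = @Measure.map Ω' (ℝ≥0 → ℝ) m' _ (fun ω t => |B' t ω|) P'

/-- `μ` is the law (on path space) of a Brownian motion with variance parameter `σ2`
started from `a`. -/
def BMLaw (a : ℝ) (σ2 : ℝ≥0) (μ : Measure (ℝ≥0 → ℝ)) : Prop :=
  ∃ (Ω' : Type) (m' : MeasurableSpace Ω') (P' : @Measure Ω' m') (B' : ℝ≥0 → Ω' → ℝ),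
    @IsProbabilityMeasure Ω' m' P' ∧ @IsBrownianMotion Ω' m' P' B' a σ2 ∧
    μ = @Measure.map Ω' (ℝ≥0 → ℝ) m' _ (fun ω t => B' t ω) P'

/-- `W` is a reflected Brownian motion started from `a`: it is distributed as the
absolute value of a standard Brownian motion started from `a`. -/
def IsReflectedBM {Ω : Type*} [MeasurableSpace Ω] (P : Measure Ω) (W : ℝ≥0 → Ω → ℝ)
    (a : ℝ) : Prop :=
  (∀ t, Measurable (W t)) ∧ ReflBMLaw a 1 (P.map fun ω t => W t ω)

/-- `N` is a Poisson process with rate `r`. -/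
def IsPoissonProcess {Ω : Type*} [MeasurableSpace Ω] (P : Measure Ω) (N : ℝ≥0 → Ω → ℕ)
    (r : ℝ≥0) : Prop :=
  (∀ t, Measurable (N t)) ∧
  (∀ᵐ ω ∂P, N 0 ω = 0) ∧
  (∀ᵐ ω ∂P, Monotone fun t => N t ω) ∧
  (∀ s t : ℝ≥0, s ≤ t →
    P.map (fun ω => N t ω - N s ω) = poissonMeasure (r * (t - s))) ∧
  ∀ (n : ℕ) (τ : Fin (n+1) → ℝ≥0), Monotone τ →
    iIndepFun
      (fun i : Fin n => fun ω => N (τ i.succ) ω - N (τ i.castSucc) ω) P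


/-- The Skorokhod distance between `f` and `g` on the time interval `[0,T]`:
the infimum over increasing time changes `λ` of
`max(sup |λ(t) - t|, sup |f(λ(t)) - g(t)|)` (here expressed via a set of admissible `ε`). -/
def dskoT (T : ℝ) (f g : ℝ≥0 → ℝ) : ℝ :=
  sInf {ε : ℝ | 0 ≤ ε ∧ ∃ lam : ℝ → ℝ, StrictMonoOn lam (Set.Icc 0 T) ∧
    ContinuousOn lam (Set.Icc 0 T) ∧ lam 0 = 0 ∧ lam T = T ∧
    ∀ t ∈ Set.Icc 0 T, |lam t - t| ≤ ε ∧ |f (lam t).toNNReal - g t.toNNReal| ≤ ε}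

/-- The metric `d_sko(f,g) = ∫₀^∞ e^{-t} (d_sko^t(f,g) ∧ 1) dt` for Skorokhod
convergence on compact time intervals. -/
def dsko (f g : ℝ≥0 → ℝ) : ℝ :=
  ∫ T in Set.Ioi (0:ℝ), Real.exp (-T) * min (dskoT T f g) 1

/-- A set of paths is (sequentially) compact for the metric `d_sko`. -/
def DSkoSeqCompact (K : Set (ℝ≥0 → ℝ)) : Prop :=
  ∀ u : ℕ → (ℝ≥0 → ℝ), (∀ k, u k ∈ K) →
    ∃ (φ : ℕ → ℕ) (g : ℝ≥0 → ℝ), StrictMono φ ∧ g ∈ K ∧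
      Filter.Tendsto (fun k => dsko (u (φ k)) g) Filter.atTop (nhds 0)

/-- Convergence in distribution, in the Skorokhod space `(D(ℝ₊,ℝ), d_sko)`, of a sequence
of processes (each defined on its own probability space) to a limiting process:
expectations of bounded measurable functionals which are `d_sko`-continuous at càdlàg
paths converge. -/
def ConvDistSkoFam (Ω : ℕ → Type) (mΩ : ∀ n, MeasurableSpace (Ω n))
    (P : ∀ n, @Measure (Ω n) (mΩ n)) (Y : ∀ n, Ω n → (ℝ≥0 → ℝ))
    {Ω' : Type*} [MeasurableSpace Ω'] (P' : Measure Ω') (Y' : Ω' → (ℝ≥0 → ℝ)) : Prop :=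
  ∀ F : (ℝ≥0 → ℝ) → ℝ, Measurable F → (∃ C, ∀ h, |F h| ≤ C) →
    (∀ h, CadlagOn h → ∀ ε : ℝ, 0 < ε → ∃ δ : ℝ, 0 < δ ∧
      ∀ h', CadlagOn h' → dsko h h' < δ → |F h' - F h| < ε) →
    Filter.Tendsto (fun n => ∫ ω, F (Y n ω) ∂(P n)) Filter.atTop
      (nhds (∫ ω, F (Y' ω) ∂P'))

/-- Jump rates of the random walk with an obstacle of width `K`:
nearest-neighbour jumps at rate `m/2`, reduced to `c m/2` on the `K` central edges
(for odd `K` the site `0` is removed and `-1`, `+1` are adjacent). -/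
def rateGen (K : ℕ) (m c : ℝ) (i j : ℤ) : ℝ :=
  if K % 2 = 0 then
    (if (i - j).natAbs = 1 then (if (K : ℤ)/2 < max |i| |j| then m/2 else c*m/2) else 0)
  else
    (if i ≠ 0 ∧ j ≠ 0 ∧ ((i - j).natAbs = 1 ∨ (i = 1 ∧ j = -1) ∨ (i = -1 ∧ j = 1)) then
      (if ((K : ℤ)+1)/2 < max |i| |j| then m/2 else c*m/2) else 0)

/-- The generator of the random walk with an obstacle:
`Qf(i) = Σ_j q(i,j)(f(j) - f(i))`. -/
def QGen (K : ℕ) (m c : ℝ) (f : ℤ → ℝ) (i : ℤ) : ℝ :=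
  rateGen K m c i (i-1) * (f (i-1) - f i) + rateGen K m c i (i+1) * (f (i+1) - f i) +
    (if i = 1 ∨ i = -1 then rateGen K m c i (-i) * (f (-i) - f i) else 0)

/-- A path with values in a discrete space is a right-continuous step function with
left limits. -/
def StepPath {E : Type*} (f : ℝ≥0 → E) : Prop :=
  (∀ t : ℝ≥0, ∃ ε : ℝ≥0, 0 < ε ∧ ∀ s, t ≤ s → s < t + ε → f s = f t) ∧
  (∀ t : ℝ≥0, 0 < t → ∃ ε : ℝ≥0, 0 < ε ∧ ε ≤ t ∧
    ∀ s s', t - ε ≤ s → s < t → t - ε ≤ s' → s' < t → f s = f s')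

/-- `ξ` is the continuous-time random walk with an obstacle of width `K`, migration rate
`m`, barrier permeability parameter `c`, started from `x0`: a right-continuous jump
process on `ℤ` solving the martingale problem for the jump rates `rateGen K m c`. -/
def IsRWGen {Ω : Type*} [MeasurableSpace Ω] (K : ℕ) (m c : ℝ) (x0 : ℤ) (P : Measure Ω)
    (ξ : ℝ≥0 → Ω → ℤ) : Prop :=
  (∀ t, Measurable (ξ t)) ∧
  (∀ᵐ ω ∂P, ξ 0 ω = x0) ∧
  (∀ᵐ ω ∂P, StepPath fun t => ξ t ω) ∧
  (K % 2 = 1 → ∀ᵐ ω ∂P, ∀ t, ξ t ω ≠ 0) ∧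
  ∀ f : ℤ → ℝ, (∃ C, ∀ i, |f i| ≤ C) →
    IsMartingaleNat P ξ
      (fun t ω => f (ξ t ω) - ∫ s in (0:ℝ)..(t:ℝ), QGen K m c f (ξ s.toNNReal ω))

/-- The rescaled random walk `X_n(t) = ξ_n(nt)/√n`, as a real-valued path. -/
def rescaledRW {Ω : Type*} (n : ℕ) (ξ : ℝ≥0 → Ω → ℤ) (ω : Ω) : ℝ≥0 → ℝ :=
  fun t => (ξ ((n : ℝ≥0) * t) ω : ℝ) / Real.sqrt n

/-- The successive crossing times of the origin of a real-valued path: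
`T_0 = 0`, `T_{i+1} = inf{t > T_i : h(T_i) h(t) < 0}`. -/
def crossTimes (h : ℝ≥0 → ℝ) : ℕ → ℝ≥0
  | 0 => 0
  | i+1 => sInf {t : ℝ≥0 | crossTimes h i < t ∧ h (crossTimes h i) * h t < 0}

/-- The successive jump times of a step path, valued in `ℝ≥0∞` (`∞` if there are no
more jumps). -/
def jumpTimes (h : ℝ≥0 → ℝ) : ℕ → ℝ≥0∞
  | 0 => 0
  | k+1 => sInf ((fun s : ℝ≥0 => (s : ℝ≥0∞)) ''
      {s : ℝ≥0 | jumpTimes h k < (s : ℝ≥0∞) ∧ h s ≠ h (jumpTimes h k).toNNReal})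

/-- The martingale part `M(t) = |h(0)| + ∫₀ᵗ 1_{|h(s)| > c} d|h|(s)` of the rescaled
walk: the sum of the increments of `|h|` over jumps happening while `|h| > c`. -/
def martPart (c : ℝ) (h : ℝ≥0 → ℝ) (t : ℝ≥0) : ℝ :=
  |h 0| + ∑' k : ℕ,
    if jumpTimes h (k+1) ≤ (t : ℝ≥0∞) then
      (if c < |h ((jumpTimes h k).toNNReal)| then
        |h ((jumpTimes h (k+1)).toNNReal)| - |h ((jumpTimes h k).toNNReal)| else 0)
    else 0

/-- The occupation time of the barrier `[-c,c]` by the path `h` up to time `t`. -/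
def occBarrier (c : ℝ) (h : ℝ≥0 → ℝ) (t : ℝ≥0) : ℝ := occBelow c h t

/-- `μ` is the law on path space of (the projection to `ℝ` of) partially reflected
Brownian motion with permeability `γ` and diffusion coefficient `σ2` started from `x`. -/
def PRBMLawStart (γ : ℝ≥0∞) (σ2 : ℝ) (x : Rddot) (μ : Measure (ℝ≥0 → ℝ)) : Prop :=
  ∃ (Ω' : Type) (m' : MeasurableSpace Ω') (P' : @Measure Ω' m') (X : ℝ≥0 → Ω' → Rddot),
    @IsProbabilityMeasure Ω' m' P' ∧ @SolvesMP Ω' m' γ σ2 P' X ∧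
    (∀ᵐ ω ∂P', X 0 ω = x) ∧
    (∀ᵐ ω ∂P', Continuous fun t => (X t ω).val) ∧
    μ = @Measure.map Ω' (ℝ≥0 → ℝ) m' _ (fun ω t => (X t ω).val) P'


/-- The pair `(l,u)` is the two-sided regulator of `f` on `[a,b]` (on `ℝ₊`, extended by
`0` to negative times): `l`, `u` are continuous, non-decreasing, vanish at `0`,
`X(t) = f(t) + l(t) - u(t) ∈ [a,b]` for `t ≥ 0`, the Stieltjes measure `dl` does not
charge `{X > a}` and `du` does not charge `{X < b}`. -/
def TwoSidedRegulator (a b : ℝ) (f l u : ℝ → ℝ) : Prop :=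
  ∃ (hml : Monotone l) (hcl : Continuous l) (hmu : Monotone u) (hcu : Continuous u),
    (∀ t : ℝ, t ≤ 0 → l t = 0) ∧ (∀ t : ℝ, t ≤ 0 → u t = 0) ∧
    (∀ t : ℝ, 0 ≤ t → f t + l t - u t ∈ Set.Icc a b) ∧
    ({ toFun := l, mono' := hml,
       right_continuous' := fun _ => hcl.continuousAt.continuousWithinAt
       : StieltjesFunction ℝ }).measure {t : ℝ | 0 ≤ t ∧ a < f t + l t - u t} = 0 ∧
    ({ toFun := u, mono' := hmu,
       right_continuous' := fun _ => hcu.continuousAt.continuousWithinAt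
       : StieltjesFunction ℝ }).measure {t : ℝ | 0 ≤ t ∧ f t + l t - u t < b} = 0

namespace TSR13

/-! ### Running supremum -/

def rawSup (g : ℝ → ℝ) (s t : ℝ) : ℝ := sSup (g '' Icc s t)

lemma bddAbove_image_Icc {g : ℝ → ℝ} (hg : Continuous g) (s t : ℝ) :
    BddAbove (g '' Icc s t) := (isCompact_Icc.image hg).bddAbove

lemma le_rawSup {g : ℝ → ℝ} (hg : Continuous g) {s r t : ℝ} (h1 : s ≤ r) (h2 : r ≤ t) :
    g r ≤ rawSup g s t :=
  le_csSup (bddAbove_image_Icc hg s t) ⟨r, ⟨h1, h2⟩, rfl⟩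

lemma rawSup_le {g : ℝ → ℝ} {s t M : ℝ} (hst : s ≤ t)
    (H : ∀ r ∈ Icc s t, g r ≤ M) : rawSup g s t ≤ M :=
  csSup_le (⟨g s, ⟨s, ⟨le_refl s, hst⟩, rfl⟩⟩) (by rintro y ⟨r, hr, rfl⟩; exact H r hr)

lemma rawSup_self (g : ℝ → ℝ) (s : ℝ) : rawSup g s s = g s := by
  simp [rawSup, Icc_self]

lemma rawSup_split {g : ℝ → ℝ} (hg : Continuous g) {s m t : ℝ} (hsm : s ≤ m) (hmt : m ≤ t) :
    rawSup g s t = max (rawSup g s m) (rawSup g m t) := by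
  rw [rawSup, ← Icc_union_Icc_eq_Icc hsm hmt, image_union]
  exact csSup_union (bddAbove_image_Icc hg s m) ⟨g s, ⟨s, ⟨le_refl s, hsm⟩, rfl⟩⟩
    (bddAbove_image_Icc hg m t) ⟨g m, ⟨m, ⟨le_refl m, hmt⟩, rfl⟩⟩

lemma rawSup_exists_max {g : ℝ → ℝ} (hg : Continuous g) {s t : ℝ} (hst : s ≤ t) :
    ∃ r ∈ Icc s t, rawSup g s t = g r :=
  isCompact_Icc.exists_sSup_image_eq (nonempty_Icc.2 hst) hg.continuousOn

lemma rawSup_mono {g : ℝ → ℝ} (hg : Continuous g) {s t t' : ℝ} (hst : s ≤ t) (h : t ≤ t') :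
    rawSup g s t ≤ rawSup g s t' := by
  rw [rawSup_split hg hst h]; exact le_max_left _ _

/-- Continuity of the running supremum. -/
lemma rawSup_continuousOn {g : ℝ → ℝ} (hg : Continuous g) (s : ℝ) :
    ContinuousOn (rawSup g s) (Ici s) := by
  intro t ht
  rw [Metric.continuousWithinAt_iff]
  intro ε hε
  obtain ⟨δ₀, hδ₀, hδ⟩ := Metric.uniformContinuousOn_iff.1
    (isCompact_Icc.uniformContinuousOn_of_continuous (s := Icc s (t+1)) hg.continuousOn)
    (ε/2) (by linarith)
  refine ⟨min δ₀ 1, by positivity, ?_⟩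
  intro t' ht' hd
  have hd0 : |t' - t| < δ₀ := lt_of_lt_of_le (by simpa [Real.dist_eq] using hd) (min_le_left _ _)
  have hd1 : |t' - t| < 1 := lt_of_lt_of_le (by simpa [Real.dist_eq] using hd) (min_le_right _ _)
  -- generic: rawSup from p to q close
  have key : ∀ p q : ℝ, s ≤ p → p ≤ q → q ≤ t + 1 → q - p < δ₀ →
      rawSup g s q ≤ rawSup g s p + ε/2 := by
    intro p q hsp hpq hq1 hqp
    rw [rawSup_split hg hsp hpq]
    refine max_le (by linarith [le_csSup (bddAbove_image_Icc hg s p) (⟨p, ⟨hsp, le_refl p⟩, rfl⟩ : g p ∈ g '' Icc s p)]) ?_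
    obtain ⟨r, hr, hre⟩ := rawSup_exists_max hg hpq
    rw [hre]
    have : dist (g r) (g p) < ε/2 := by
      refine hδ r ⟨le_trans hsp hr.1, le_trans hr.2 hq1⟩ p ⟨hsp, by linarith [hr.1, hpq, hq1]⟩ ?_
      rw [Real.dist_eq, abs_of_nonneg (by linarith [hr.1])]
      linarith [hr.2]
    have := le_of_lt (abs_lt.1 (by simpa [Real.dist_eq] using this)).2
    have hgp : g p ≤ rawSup g s p := le_rawSup hg hsp (le_refl p)
    linarith
  rcases le_total t' t with h' | h'
  · have h1 : rawSup g s t ≤ rawSup g s t' + ε/2 := by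
      refine key t' t (mem_Ici.1 ht') h' (by linarith) ?_
      calc t - t' ≤ |t' - t| := by rw [abs_sub_comm]; exact le_abs_self _
      _ < δ₀ := hd0
    have h2 : rawSup g s t' ≤ rawSup g s t := rawSup_mono hg (mem_Ici.1 ht') h'
    rw [Real.dist_eq]
    rw [abs_lt]; constructor <;> linarith
  · have h1 : rawSup g s t' ≤ rawSup g s t + ε/2 := by
      refine key t t' (mem_Ici.1 ht) h' ?_ ?_
      · have := (abs_lt.1 hd1).2; linarith
      · have := (abs_lt.1 hd0).2; linarith
    have h2 : rawSup g s t ≤ rawSup g s t' := rawSup_mono hg (mem_Ici.1 ht) h'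
    rw [Real.dist_eq, abs_lt]; constructor <;> linarith

/-! ### One-sided reflection at a lower barrier `c` -/

def refl (c : ℝ) (g : ℝ → ℝ) (x s t : ℝ) : ℝ :=
  max (rawSup (fun r => c - x - g r + g s) s t) 0

def pathY (c : ℝ) (g : ℝ → ℝ) (x s t : ℝ) : ℝ := x + g t - g s + refl c g x s t

lemma inner_continuous {g : ℝ → ℝ} (hg : Continuous g) (c x s : ℝ) :
    Continuous (fun r => c - x - g r + g s) := by continuity

lemma refl_nonneg (c : ℝ) (g : ℝ → ℝ) (x s t : ℝ) : 0 ≤ refl c g x s t := le_max_right _ _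

lemma refl_self {c x : ℝ} (g : ℝ → ℝ) (s : ℝ) (hcx : c ≤ x) : refl c g x s s = 0 := by
  rw [refl, rawSup_self]
  simp only [sub_add_cancel]
  exact max_eq_right (by linarith)

lemma pathY_self {c x : ℝ} (g : ℝ → ℝ) (s : ℝ) (hcx : c ≤ x) : pathY c g x s s = x := by
  rw [pathY, refl_self g s hcx]; ring

lemma refl_mono {c x : ℝ} {g : ℝ → ℝ} (hg : Continuous g) {s t t' : ℝ}
    (hst : s ≤ t) (h : t ≤ t') : refl c g x s t ≤ refl c g x s t' :=
  max_le_max (rawSup_mono (inner_continuous hg c x s) hst h) (le_refl 0)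

lemma pathY_ge {c x : ℝ} {g : ℝ → ℝ} (hg : Continuous g) {s t : ℝ} (hst : s ≤ t) :
    c ≤ pathY c g x s t := by
  have h1 : (c - x - g t + g s) ≤ rawSup (fun r => c - x - g r + g s) s t :=
    le_rawSup (inner_continuous hg c x s) hst (le_refl t)
  have h2 := le_max_left (rawSup (fun r => c - x - g r + g s) s t) 0
  rw [pathY, refl]; linarith

lemma refl_continuousOn {c x : ℝ} {g : ℝ → ℝ} (hg : Continuous g) (s : ℝ) :
    ContinuousOn (refl c g x s) (Ici s) :=
  (continuous_id.max continuous_const).comp_continuousOn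
    (rawSup_continuousOn (inner_continuous hg c x s) s)

lemma pathY_continuousOn {c x : ℝ} {g : ℝ → ℝ} (hg : Continuous g) (s : ℝ) :
    ContinuousOn (pathY c g x s) (Ici s) := by
  have : ContinuousOn (fun t => x + g t - g s) (Ici s) := by fun_prop
  exact this.add (refl_continuousOn hg s)

/-- Complementarity: the local time does not increase while the path is strictly above `c`. -/
lemma refl_const_of_gt {c x : ℝ} {g : ℝ → ℝ} (hg : Continuous g) {s p q : ℝ}
    (hsp : s ≤ p) (hpq : p ≤ q) (H : ∀ r ∈ Icc p q, c < pathY c g x s r) :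
    refl c g x s q = refl c g x s p := by
  have hhc : Continuous (fun r => c - x - g r + g s) := inner_continuous hg c x s
  set A := rawSup (fun r => c - x - g r + g s) s p with hA
  set B := rawSup (fun r => c - x - g r + g s) p q with hB
  have hsplit : rawSup (fun r => c - x - g r + g s) s q = max A B := rawSup_split hhc hsp hpq
  have key : B ≤ max A 0 := by
    by_contra hcon
    push_neg at hcon
    obtain ⟨r, hr, hre⟩ := rawSup_exists_max hhc hpq
    have h1 := H r hr
    rw [pathY] at h1
    have h2 : B < refl c g x s r := by
      rw [hB, hre]
      show c - x - g r + g s < refl c g x s r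
      linarith
    have h3 : refl c g x s r ≤ max (max A B) 0 := by
      rw [refl, rawSup_split hhc hsp hr.1]
      exact max_le_max (max_le_max le_rfl (rawSup_mono hhc hr.1 hr.2)) le_rfl
    have h0B : (0:ℝ) ≤ B := le_trans (le_max_right A 0) hcon.le
    have hAB : A ≤ B := le_trans (le_max_left A 0) hcon.le
    have h4 : max (max A B) 0 = B := by
      rw [max_eq_left (le_trans h0B (le_max_right A B)), max_eq_right hAB]
    rw [h4] at h3
    linarith
  rw [refl, refl, hsplit]
  exact le_antisymm (max_le (max_le (le_max_left A 0) key) (le_max_right _ _))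
    (max_le_max (le_max_left A B) le_rfl)
/-! ### Restart identities -/

lemma max_max_zero_eq (A B : ℝ) : max (max A B) 0 = max A 0 + max (B - max A 0) 0 := by
  rcases le_total B (max A 0) with h | h
  · have h2 : max (B - max A 0) 0 = 0 := max_eq_right (by linarith)
    rw [h2, add_zero]
    rcases le_total B A with h' | h'
    · rw [max_eq_left h']
    · rw [max_eq_right h']
      exact le_antisymm (max_le h (le_max_right A 0)) (max_le_max h' le_rfl)
  · have h0 : (0:ℝ) ≤ B := le_trans (le_max_right A 0) h
    have hA : A ≤ B := le_trans (le_max_left A 0) h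
    have h2 : max (B - max A 0) 0 = B - max A 0 := max_eq_left (by linarith)
    rw [h2, max_eq_right hA, max_eq_left h0]
    ring

lemma rawSup_sub_const {g : ℝ → ℝ} (hg : Continuous g) {s t : ℝ} (hst : s ≤ t) (cm : ℝ) :
    rawSup (fun r => g r - cm) s t = rawSup g s t - cm := by
  have h1 : (fun y : ℝ => y - cm) (sSup (g '' Icc s t))
      = sSup ((fun y : ℝ => y - cm) '' (g '' Icc s t)) := by
    refine Monotone.map_csSup_of_continuousAt (f := fun y : ℝ => y - cm)
      (continuous_id.sub continuous_const).continuousAt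
      (fun u v huv => by simpa using huv)
      ⟨g s, ⟨s, ⟨le_refl s, hst⟩, rfl⟩⟩ (bddAbove_image_Icc hg s t)
  rw [rawSup, rawSup]
  have h2 : ((fun y : ℝ => y - cm) '' (g '' Icc s t)) = (fun r => g r - cm) '' Icc s t := by
    rw [← image_comp]; rfl
  rw [← h2]
  exact h1.symm

lemma refl_restart {c x : ℝ} {g : ℝ → ℝ} (hg : Continuous g) {s m t : ℝ}
    (hsm : s ≤ m) (hmt : m ≤ t) (hcx : c ≤ x) :
    refl c g x s t = refl c g x s m + refl c g (pathY c g x s m) m t := by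
  have hhc : Continuous (fun r => c - x - g r + g s) := inner_continuous hg c x s
  have hinner : (fun r => c - pathY c g x s m - g r + g m)
      = fun r => (c - x - g r + g s) - refl c g x s m := by
    funext r; rw [pathY]; ring
  have e1 : refl c g (pathY c g x s m) m t
      = max (rawSup (fun r => c - x - g r + g s) m t - refl c g x s m) 0 := by
    rw [refl, hinner, rawSup_sub_const hhc hmt]
  rw [e1, refl, rawSup_split hhc hsm hmt]
  rw [show refl c g x s m = max (rawSup (fun r => c - x - g r + g s) s m) 0 from rfl]
  exact max_max_zero_eq _ _

lemma pathY_restart {c x : ℝ} {g : ℝ → ℝ} (hg : Continuous g) {s m t : ℝ}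
    (hsm : s ≤ m) (hmt : m ≤ t) (hcx : c ≤ x) :
    pathY c g x s t = pathY c g (pathY c g x s m) m t := by
  have h := refl_restart hg hsm hmt hcx
  show x + g t - g s + refl c g x s t
      = pathY c g x s m + g t - g m + refl c g (pathY c g x s m) m t
  rw [h, show pathY c g x s m = x + g m - g s + refl c g x s m from rfl]
  ring

/-! ### Hitting time -/

def hitT (c d : ℝ) (g : ℝ → ℝ) (x s : ℝ) : ℝ :=
  sInf ({t | t ∈ Icc s (s+1) ∧ pathY c g x s t = d} ∪ {s+1})

lemma hitT_set_closed {c d x : ℝ} {g : ℝ → ℝ} (hg : Continuous g) (s : ℝ) :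
    IsClosed ({t | t ∈ Icc s (s+1) ∧ pathY c g x s t = d} ∪ {s+1}) := by
  refine IsClosed.union ?_ isClosed_singleton
  have : {t | t ∈ Icc s (s+1) ∧ pathY c g x s t = d}
      = Icc s (s+1) ∩ pathY c g x s ⁻¹' {d} := by
    ext t; simp only [mem_setOf_eq, mem_inter_iff, mem_preimage, mem_singleton_iff]
  rw [this]
  exact ContinuousOn.preimage_isClosed_of_isClosed
    ((pathY_continuousOn (c := c) (x := x) hg s).mono Icc_subset_Ici_self)
    isClosed_Icc isClosed_singleton

lemma hitT_nonempty (c d : ℝ) (g : ℝ → ℝ) (x s : ℝ) :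
    ({t | t ∈ Icc s (s+1) ∧ pathY c g x s t = d} ∪ {s+1}).Nonempty := ⟨s+1, Or.inr rfl⟩

lemma hitT_bddBelow (c d : ℝ) (g : ℝ → ℝ) (x s : ℝ) :
    s ∈ lowerBounds ({t | t ∈ Icc s (s+1) ∧ pathY c g x s t = d} ∪ {s+1}) := by
  rintro t (⟨⟨h1, _⟩, _⟩ | h); exacts [h1, by rw [mem_singleton_iff] at h; linarith [h.ge]]

lemma hitT_ge (c d : ℝ) (g : ℝ → ℝ) (x s : ℝ) : s ≤ hitT c d g x s :=
  le_csInf (hitT_nonempty c d g x s) (hitT_bddBelow c d g x s)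

lemma hitT_le (c d : ℝ) (g : ℝ → ℝ) (x s : ℝ) : hitT c d g x s ≤ s + 1 :=
  csInf_le ⟨s, hitT_bddBelow c d g x s⟩ (Or.inr rfl)

lemma hitT_mem {c d x : ℝ} {g : ℝ → ℝ} (hg : Continuous g) (s : ℝ) :
    pathY c g x s (hitT c d g x s) = d ∨ hitT c d g x s = s + 1 := by
  have := (hitT_set_closed (c := c) (d := d) (x := x) hg s).csInf_mem
    (hitT_nonempty c d g x s) ⟨s, hitT_bddBelow c d g x s⟩
  rcases this with ⟨_, h⟩ | h
  · exact Or.inl h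
  · exact Or.inr h

lemma not_hit_before {c d x : ℝ} {g : ℝ → ℝ} {s t : ℝ}
    (h1 : s ≤ t) (h2 : t < hitT c d g x s) : pathY c g x s t ≠ d := by
  intro hY
  have ht : t ∈ ({t | t ∈ Icc s (s+1) ∧ pathY c g x s t = d} ∪ {s+1}) :=
    Or.inl ⟨⟨h1, le_trans h2.le (hitT_le c d g x s)⟩, hY⟩
  exact absurd (csInf_le ⟨s, hitT_bddBelow c d g x s⟩ ht) (not_le.2 h2)

/-- On `[s, hitT]`, the reflected path stays below the target barrier `d`. -/
lemma pathY_le_hit {c d x : ℝ} {g : ℝ → ℝ} (hg : Continuous g) {s t : ℝ}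
    (hcx : c ≤ x) (hxd : x ≤ d) (h1 : s ≤ t) (h2 : t ≤ hitT c d g x s) :
    pathY c g x s t ≤ d := by
  by_contra hcon
  push_neg at hcon
  have hIVT := intermediate_value_Icc h1 (f := pathY c g x s)
    ((pathY_continuousOn (c := c) (x := x) hg s).mono Icc_subset_Ici_self)
  have hd : d ∈ Icc (pathY c g x s s) (pathY c g x s t) := by
    rw [pathY_self g s hcx]; exact ⟨hxd, hcon.le⟩
  obtain ⟨r, hr, hrY⟩ := hIVT hd
  have hrh : hitT c d g x s ≤ r := by
    refine csInf_le ⟨s, hitT_bddBelow c d g x s⟩ (Or.inl ⟨⟨hr.1, ?_⟩, hrY⟩)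
    exact le_trans hr.2 (le_trans h2 (hitT_le c d g x s))
  have hrt : r = t := le_antisymm hr.2 (le_trans h2 hrh)
  rw [hrt] at hrY
  rw [hrY] at hcon
  exact lt_irrefl d hcon
/-! ### Oscillation lemma: a reflected path started at the barrier which reaches level `d`
forces an oscillation of `g` of size `d - c`. -/

lemma exists_osc {c d : ℝ} {g : ℝ → ℝ} (hg : Continuous g) {s τ : ℝ}
    (hcd : c < d) (hsτ : s ≤ τ) (hY : pathY c g c s τ = d) :
    ∃ p ∈ Icc s τ, g τ - g p = d - c := by
  set A := {t | t ∈ Icc s τ ∧ pathY c g c s t = c} with hA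
  have hAclosed : IsClosed A := by
    have : A = Icc s τ ∩ pathY c g c s ⁻¹' {c} := by
      ext t; simp only [hA, mem_setOf_eq, mem_inter_iff, mem_preimage, mem_singleton_iff]
    rw [this]
    exact ContinuousOn.preimage_isClosed_of_isClosed
      ((pathY_continuousOn (c := c) (x := c) hg s).mono Icc_subset_Ici_self)
      isClosed_Icc isClosed_singleton
  have hAne : A.Nonempty := ⟨s, ⟨le_refl s, hsτ⟩, pathY_self g s le_rfl⟩
  have hAbdd : BddAbove A := ⟨τ, fun t ht => ht.1.2⟩
  set r := sSup A with hr
  have hrA : r ∈ A := hAclosed.csSup_mem hAne hAbdd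
  have hrτ : r ≤ τ := hrA.1.2
  have hsr : s ≤ r := hrA.1.1
  have hrne : r ≠ τ := by
    intro hrt
    rw [hrt] at hrA
    rw [hrA.2] at hY
    exact absurd hY (ne_of_lt hcd)
  have hrlt : r < τ := lt_of_le_of_ne hrτ hrne
  -- on (r, τ], the path is strictly above c
  have habove : ∀ t ∈ Ioc r τ, c < pathY c g c s t := by
    intro t ht
    have h1 : c ≤ pathY c g c s t := pathY_ge hg (le_trans hsr ht.1.le)
    rcases lt_or_eq_of_le h1 with h | h
    · exact h
    · exfalso
      have : t ∈ A := ⟨⟨le_trans hsr ht.1.le, ht.2⟩, h.symm⟩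
      exact absurd (le_csSup hAbdd this) (not_le.2 ht.1)
  -- the local time is constant on (r, τ]
  have hconst : ∀ p ∈ Ioc r τ, refl c g c s τ = refl c g c s p := by
    intro p hp
    exact refl_const_of_gt hg (le_trans hsr hp.1.le) hp.2
      (fun u hu => habove u ⟨lt_of_lt_of_le hp.1 hu.1, hu.2⟩)
  -- limit as p → r⁺ : refl r = refl τ
  have hlim : refl c g c s r = refl c g c s τ := by
    have hc1 : ContinuousWithinAt (refl c g c s) (Ici s) r := refl_continuousOn hg s r (mem_Ici.2 hsr)
    have hten : Tendsto (refl c g c s) (𝓝[Ioc r τ] r) (𝓝 (refl c g c s r)) :=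
      hc1.tendsto.mono_left (nhdsWithin_mono r (fun t ht => le_trans hsr ht.1.le))
    have hconst' : Tendsto (refl c g c s) (𝓝[Ioc r τ] r) (𝓝 (refl c g c s τ)) := by
      refine Tendsto.congr' ?_ tendsto_const_nhds
      filter_upwards [self_mem_nhdsWithin] with p hp
      exact hconst p hp
    have : (𝓝[Ioc r τ] r).NeBot := by
      rw [nhdsWithin_Ioc_eq_nhdsGT hrlt]
      exact nhdsGT_neBot r
    exact tendsto_nhds_unique hten hconst'
  refine ⟨r, ⟨hsr, hrτ⟩, ?_⟩
  have h1 : pathY c g c s τ = c + g τ - g s + refl c g c s τ := by rw [pathY]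
  have h2 : pathY c g c s r = c + g r - g s + refl c g c s r := by rw [pathY]
  rw [hY] at h1
  rw [hrA.2] at h2
  rw [hlim] at h2
  linarith
/-! ### The alternating-phase construction -/

structure RSt where
  s : ℝ
  x : ℝ
  cl : ℝ
  cu : ℝ
  low : Bool

open Classical in
def stepSt (a b : ℝ) (g : ℝ → ℝ) (st : RSt) : RSt :=
  if st.low = true then
    { s := hitT a b g st.x st.s,
      x := pathY a g st.x st.s (hitT a b g st.x st.s),
      cl := st.cl + refl a g st.x st.s (hitT a b g st.x st.s),
      cu := st.cu,
      low := if pathY a g st.x st.s (hitT a b g st.x st.s) = b then false else true }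
  else
    { s := hitT (-b) (-a) (-g) (-st.x) st.s,
      x := -pathY (-b) (-g) (-st.x) st.s (hitT (-b) (-a) (-g) (-st.x) st.s),
      cl := st.cl,
      cu := st.cu + refl (-b) (-g) (-st.x) st.s (hitT (-b) (-a) (-g) (-st.x) st.s),
      low := if pathY (-b) (-g) (-st.x) st.s (hitT (-b) (-a) (-g) (-st.x) st.s) = -a
        then true else false }

open Classical in
def initSt (b : ℝ) (g : ℝ → ℝ) : RSt := ⟨0, g 0, 0, 0, if g 0 < b then true else false⟩

def seqSt (a b : ℝ) (g : ℝ → ℝ) (n : ℕ) : RSt := (stepSt a b g)^[n] (initSt b g)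

lemma seqSt_zero (a b : ℝ) (g : ℝ → ℝ) : seqSt a b g 0 = initSt b g := rfl

lemma seqSt_succ (a b : ℝ) (g : ℝ → ℝ) (n : ℕ) :
    seqSt a b g (n+1) = stepSt a b g (seqSt a b g n) := Function.iterate_succ_apply' _ _ _

def InvSt (a b : ℝ) (g : ℝ → ℝ) (st : RSt) : Prop :=
  0 ≤ st.s ∧ st.x = g st.s + st.cl - st.cu ∧
    (st.low = true → a ≤ st.x ∧ st.x < b) ∧ (st.low = false → a < st.x ∧ st.x ≤ b)

section Machine

variable {a b : ℝ} {g : ℝ → ℝ}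

lemma neg_g_cont (hg : Continuous g) : Continuous (-g) := hg.neg

lemma inv_init (hab : a < b) (hg0 : g 0 ∈ Icc a b) : InvSt a b g (initSt b g) := by
  refine ⟨le_refl 0, by simp [initSt], ?_, ?_⟩
  · intro h
    simp only [initSt] at h ⊢
    split at h
    · rename_i hlt; exact ⟨hg0.1, hlt⟩
    · simp at h
  · intro h
    simp only [initSt] at h ⊢
    split at h
    · simp at h
    · rename_i hnlt
      have hb : g 0 = b := le_antisymm hg0.2 (not_lt.1 hnlt)
      rw [hb]; exact ⟨hab, le_refl b⟩

lemma step_s_ge (a b : ℝ) (g : ℝ → ℝ) (st : RSt) : st.s ≤ (stepSt a b g st).s := by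
  rw [stepSt]
  split <;> simp only <;> exact hitT_ge _ _ _ _ _

lemma step_s_le (a b : ℝ) (g : ℝ → ℝ) (st : RSt) : (stepSt a b g st).s ≤ st.s + 1 := by
  rw [stepSt]
  split <;> simp only <;> exact hitT_le _ _ _ _ _

lemma inv_step (hab : a < b) (hg : Continuous g) {st : RSt} (h : InvSt a b g st) :
    InvSt a b g (stepSt a b g st) := by
  obtain ⟨h0, hx, hlow, hup⟩ := h
  rw [stepSt]
  split
  · rename_i hl
    obtain ⟨hax, hxb⟩ := hlow hl
    set τ := hitT a b g st.x st.s with hτ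
    have hsτ : st.s ≤ τ := hitT_ge _ _ _ _ _
    have hge : a ≤ pathY a g st.x st.s τ := pathY_ge hg hsτ
    have hle : pathY a g st.x st.s τ ≤ b := pathY_le_hit hg hax hxb.le hsτ (le_refl _)
    refine ⟨le_trans h0 hsτ, ?_, ?_, ?_⟩
    · simp only
      rw [pathY, hx]; ring
    · intro h'
      simp only at h' ⊢
      split at h'
      · simp at h'
      · rename_i hne
        exact ⟨hge, lt_of_le_of_ne hle hne⟩
    · intro h'
      simp only at h' ⊢
      split at h'
      · rename_i heq; rw [heq]; exact ⟨hab, le_refl b⟩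
      · simp at h'
  · rename_i hl
    have hl' : st.low = false := by
      cases hst : st.low
      · rfl
      · exact absurd hst hl
    obtain ⟨hax, hxb⟩ := hup hl'
    set τ := hitT (-b) (-a) (-g) (-st.x) st.s with hτ
    have hsτ : st.s ≤ τ := hitT_ge _ _ _ _ _
    have hcx : -b ≤ -st.x := by linarith
    have hxd : -st.x ≤ -a := by linarith
    have hge : -b ≤ pathY (-b) (-g) (-st.x) st.s τ := pathY_ge (neg_g_cont hg) hsτ
    have hle : pathY (-b) (-g) (-st.x) st.s τ ≤ -a :=
      pathY_le_hit (neg_g_cont hg) hcx hxd hsτ (le_refl _)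
    refine ⟨le_trans h0 hsτ, ?_, ?_, ?_⟩
    · simp only
      rw [pathY, hx]
      simp only [Pi.neg_apply]
      ring
    · intro h'
      simp only at h' ⊢
      split at h'
      · rename_i heq; rw [heq]; constructor <;> linarith
      · simp at h'
    · intro h'
      simp only at h' ⊢
      split at h'
      · simp at h'
      · rename_i hne
        have : -a ≠ pathY (-b) (-g) (-st.x) st.s τ := fun hq => hne hq.symm
        constructor <;> [skip; linarith]
        have := lt_of_le_of_ne hle hne
        linarith

end Machine
/-! ### Segment functions -/

open Classical in
def segL (a : ℝ) (g : ℝ → ℝ) (st : RSt) (t : ℝ) : ℝ :=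
  st.cl + (if st.low = true then refl a g st.x st.s t else 0)

open Classical in
def segU (b : ℝ) (g : ℝ → ℝ) (st : RSt) (t : ℝ) : ℝ :=
  st.cu + (if st.low = true then 0 else refl (-b) (-g) (-st.x) st.s t)

open Classical in
def segX (a b : ℝ) (g : ℝ → ℝ) (st : RSt) (t : ℝ) : ℝ :=
  if st.low = true then pathY a g st.x st.s t else -pathY (-b) (-g) (-st.x) st.s t

section Machine2

variable {a b : ℝ} {g : ℝ → ℝ} {st : RSt}

lemma inv_x_ge (h : InvSt a b g st) : a ≤ st.x := by
  obtain ⟨_, _, hlow, hup⟩ := h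
  cases hst : st.low
  · exact (hup hst).1.le
  · exact (hlow hst).1

lemma inv_x_le (h : InvSt a b g st) : st.x ≤ b := by
  obtain ⟨_, _, hlow, hup⟩ := h
  cases hst : st.low
  · exact (hup hst).2
  · exact (hlow hst).2.le

lemma segL_self (h : InvSt a b g st) : segL a g st st.s = st.cl := by
  rw [segL]
  split
  · rw [refl_self g st.s (inv_x_ge h), add_zero]
  · rw [add_zero]

lemma segU_self (h : InvSt a b g st) : segU b g st st.s = st.cu := by
  rw [segU]
  split
  · rw [add_zero]
  · rw [refl_self (-g) st.s (by have := inv_x_le h; linarith), add_zero]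

lemma segX_self (h : InvSt a b g st) : segX a b g st st.s = st.x := by
  rw [segX]
  split
  · exact pathY_self g st.s (inv_x_ge h)
  · rw [pathY_self (-g) st.s (by have := inv_x_le h; linarith), neg_neg]

lemma junction_cl (st : RSt) : (stepSt a b g st).cl = segL a g st (stepSt a b g st).s := by
  rw [stepSt]
  split <;> rename_i hl <;> simp only [segL]
  · rw [if_pos hl]
  · rw [if_neg hl, add_zero]

lemma junction_cu (st : RSt) : (stepSt a b g st).cu = segU b g st (stepSt a b g st).s := by
  rw [stepSt]
  split <;> rename_i hl <;> simp only [segU]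
  · rw [if_pos hl, add_zero]
  · rw [if_neg hl]

lemma junction_x (st : RSt) : (stepSt a b g st).x = segX a b g st (stepSt a b g st).s := by
  rw [stepSt]
  split <;> rename_i hl <;> simp only [segX]
  · rw [if_pos hl]
  · rw [if_neg hl]

lemma segL_mono (hg : Continuous g) {t t' : ℝ} (h1 : st.s ≤ t) (h2 : t ≤ t') :
    segL a g st t ≤ segL a g st t' := by
  rw [segL, segL]
  split
  · exact add_le_add_right (refl_mono hg h1 h2) _
  · exact le_refl _

lemma segU_mono (hg : Continuous g) {t t' : ℝ} (h1 : st.s ≤ t) (h2 : t ≤ t') :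
    segU b g st t ≤ segU b g st t' := by
  rw [segU, segU]
  split
  · exact le_refl _
  · exact add_le_add_right (refl_mono (neg_g_cont hg) h1 h2) _

lemma segL_contOn (hg : Continuous g) : ContinuousOn (segL a g st) (Ici st.s) := by
  cases hst : st.low
  · have he : segL a g st = fun _ => st.cl + 0 := by
      funext t; rw [segL, if_neg (by rw [hst]; simp)]
    rw [he]; exact continuousOn_const
  · have he : segL a g st = fun t => st.cl + refl a g st.x st.s t := by
      funext t; rw [segL, if_pos hst]
    rw [he]; exact continuousOn_const.add (refl_continuousOn hg st.s)

lemma segU_contOn (hg : Continuous g) : ContinuousOn (segU b g st) (Ici st.s) := by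
  cases hst : st.low
  · have he : segU b g st = fun t => st.cu + refl (-b) (-g) (-st.x) st.s t := by
      funext t; rw [segU, if_neg (by rw [hst]; simp)]
    rw [he]; exact continuousOn_const.add (refl_continuousOn (neg_g_cont hg) st.s)
  · have he : segU b g st = fun _ => st.cu + 0 := by
      funext t; rw [segU, if_pos hst]
    rw [he]; exact continuousOn_const

lemma segX_contOn (hg : Continuous g) : ContinuousOn (segX a b g st) (Ici st.s) := by
  cases hst : st.low
  · have he : segX a b g st = fun t => -pathY (-b) (-g) (-st.x) st.s t := by
      funext t; rw [segX, if_neg (by rw [hst]; simp)]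
    rw [he]; exact (pathY_continuousOn (neg_g_cont hg) st.s).neg
  · have he : segX a b g st = fun t => pathY a g st.x st.s t := by
      funext t; rw [segX, if_pos hst]
    rw [he]; exact pathY_continuousOn hg st.s

lemma segX_mem (hg : Continuous g) (h : InvSt a b g st) {t : ℝ}
    (h1 : st.s ≤ t) (h2 : t ≤ (stepSt a b g st).s) :
    a ≤ segX a b g st t ∧ segX a b g st t ≤ b := by
  by_cases hl : st.low = true
  · have hx := h.2.2.1 hl
    have hs' : (stepSt a b g st).s = hitT a b g st.x st.s := by rw [stepSt, if_pos hl]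
    rw [segX, if_pos hl]
    exact ⟨pathY_ge hg h1, pathY_le_hit hg hx.1 hx.2.le h1 (by rw [← hs']; exact h2)⟩
  · have hl' : st.low = false := by cases hst : st.low; rfl; exact absurd hst hl
    have hx := h.2.2.2 hl'
    have hs' : (stepSt a b g st).s = hitT (-b) (-a) (-g) (-st.x) st.s := by
      rw [stepSt, if_neg hl]
    rw [segX, if_neg hl]
    have hge : -b ≤ pathY (-b) (-g) (-st.x) st.s t := pathY_ge (neg_g_cont hg) h1
    have hle : pathY (-b) (-g) (-st.x) st.s t ≤ -a :=
      pathY_le_hit (neg_g_cont hg) (by linarith [hx.2]) (by linarith [hx.1]) h1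
        (by rw [← hs']; exact h2)
    constructor <;> linarith

lemma segX_eq (h : InvSt a b g st) {t : ℝ} :
    segX a b g st t = g t + segL a g st t - segU b g st t := by
  have hx := h.2.1
  cases hst : st.low
  · have hcond : ¬(st.low = true) := by rw [hst]; simp
    rw [segX, if_neg hcond, segL, if_neg hcond, segU, if_neg hcond, pathY, hx]
    simp only [Pi.neg_apply]
    ring
  · rw [segX, if_pos hst, segL, if_pos hst, segU, if_pos hst, pathY, hx]
    ring

lemma segL_compl (hg : Continuous g) {p q : ℝ} (h1 : st.s ≤ p) (h2 : p ≤ q)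
    (H : ∀ r ∈ Icc p q, a < segX a b g st r) : segL a g st q = segL a g st p := by
  cases hst : st.low
  · have hcond : ¬(st.low = true) := by rw [hst]; simp
    rw [segL, segL, if_neg hcond, if_neg hcond]
  · rw [segL, segL, if_pos hst, if_pos hst,
      refl_const_of_gt hg h1 h2 (fun r hr => by
        have := H r hr; rw [segX, if_pos hst] at this; exact this)]

lemma segU_compl (hg : Continuous g) {p q : ℝ} (h1 : st.s ≤ p) (h2 : p ≤ q)
    (H : ∀ r ∈ Icc p q, segX a b g st r < b) : segU b g st q = segU b g st p := by
  cases hst : st.low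
  · have hcond : ¬(st.low = true) := by rw [hst]; simp
    rw [segU, segU, if_neg hcond, if_neg hcond,
      refl_const_of_gt (neg_g_cont hg) h1 h2 (fun r hr => by
        have := H r hr; rw [segX, if_neg hcond] at this; linarith)]
  · rw [segU, segU, if_pos hst, if_pos hst]

lemma step_nonflip (hg : Continuous g) (hsame : (stepSt a b g st).low = st.low) :
    (stepSt a b g st).s = st.s + 1 := by
  by_cases hl : st.low = true
  · rw [stepSt, if_pos hl] at hsame ⊢
    simp only at hsame ⊢
    split at hsame
    · rw [hl] at hsame; simp at hsame
    · rename_i hne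
      rcases hitT_mem (c := a) (d := b) (x := st.x) hg st.s with hmem | hmem
      · exact absurd hmem hne
      · exact hmem
  · have hl' : st.low = false := by cases hst : st.low; rfl; exact absurd hst hl
    rw [stepSt, if_neg hl] at hsame ⊢
    simp only at hsame ⊢
    split at hsame
    · rw [hl'] at hsame; simp at hsame
    · rename_i hne
      rcases hitT_mem (c := -b) (d := -a) (x := -st.x) (neg_g_cont hg) st.s with hmem | hmem
      · exact absurd hmem hne
      · exact hmem

lemma step_flip_low (hl : st.low = true) (hflip : ¬(stepSt a b g st).low = st.low) :
    (stepSt a b g st).x = b := by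
  rw [stepSt, if_pos hl] at hflip ⊢
  simp only at hflip ⊢
  split at hflip
  · assumption
  · exact absurd hl.symm hflip

lemma step_flip_up (hl : st.low = false) (hflip : ¬(stepSt a b g st).low = st.low) :
    (stepSt a b g st).x = a := by
  have hl' : ¬ st.low = true := by rw [hl]; simp
  rw [stepSt, if_neg hl'] at hflip ⊢
  simp only at hflip ⊢
  split at hflip
  · rename_i heq; rw [heq]; ring
  · exact absurd hl.symm hflip

lemma step_osc (hab : a < b) (hg : Continuous g)
    (hstart : (st.low = true ∧ st.x = a) ∨ (st.low = false ∧ st.x = b))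
    (hflip : ¬(stepSt a b g st).low = st.low) :
    ∃ p ∈ Icc st.s (stepSt a b g st).s, |g ((stepSt a b g st).s) - g p| = b - a := by
  rcases hstart with ⟨hl, hx⟩ | ⟨hl, hx⟩
  · have hY : pathY a g st.x st.s (hitT a b g st.x st.s) = b := by
      rw [stepSt, if_pos hl] at hflip
      simp only at hflip
      by_contra hne
      rw [if_neg hne] at hflip
      exact hflip hl.symm
    have hs' : (stepSt a b g st).s = hitT a b g st.x st.s := by rw [stepSt, if_pos hl]
    rw [hs', hx] at *
    obtain ⟨p, hp, hpe⟩ := exists_osc hg hab (hitT_ge a b g a st.s) hY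
    exact ⟨p, hp, by rw [abs_of_nonneg (by linarith)]; exact hpe⟩
  · have hl' : ¬ st.low = true := by rw [hl]; simp
    have hY : pathY (-b) (-g) (-st.x) st.s (hitT (-b) (-a) (-g) (-st.x) st.s) = -a := by
      rw [stepSt, if_neg hl'] at hflip
      simp only at hflip
      by_contra hne
      rw [if_neg hne] at hflip
      exact hflip hl.symm
    have hs' : (stepSt a b g st).s = hitT (-b) (-a) (-g) (-st.x) st.s := by
      rw [stepSt, if_neg hl']
    rw [hs', hx] at *
    obtain ⟨p, hp, hpe⟩ := exists_osc (neg_g_cont hg) (by linarith : -b < -a)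
      (hitT_ge (-b) (-a) (-g) (-b) st.s) hY
    refine ⟨p, hp, ?_⟩
    simp only [Pi.neg_apply] at hpe
    rw [abs_sub_comm, abs_of_nonneg (by linarith)]
    linarith

end Machine2
/-! ### The sequence of phases -/

section Machine3

variable {a b : ℝ} {g : ℝ → ℝ}

lemma inv_seq (hab : a < b) (hg : Continuous g) (hg0 : g 0 ∈ Icc a b) (n : ℕ) :
    InvSt a b g (seqSt a b g n) := by
  induction n with
  | zero => exact inv_init hab hg0
  | succ n ih => rw [seqSt_succ]; exact inv_step hab hg ih

lemma seq_s_mono (a b : ℝ) (g : ℝ → ℝ) : Monotone (fun n => (seqSt a b g n).s) := by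
  apply monotone_nat_of_le_succ
  intro n
  rw [seqSt_succ]
  exact step_s_ge a b g _

lemma seq_s_nonneg (hab : a < b) (hg : Continuous g) (hg0 : g 0 ∈ Icc a b) (n : ℕ) :
    0 ≤ (seqSt a b g n).s := (inv_seq hab hg hg0 n).1

/-- The phase times tend to infinity. -/
lemma exists_seq_s_ge (hab : a < b) (hg : Continuous g) (hg0 : g 0 ∈ Icc a b) (T : ℝ) :
    ∃ n, T ≤ (seqSt a b g n).s := by
  set T' := max T 0 with hT'
  -- uniform continuity modulus on [0, T']
  obtain ⟨δ₀, hδ₀, hδ⟩ := Metric.uniformContinuousOn_iff.1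
    (isCompact_Icc.uniformContinuousOn_of_continuous (s := Icc (0:ℝ) T') hg.continuousOn)
    (b - a) (by linarith)
  set δ := min (δ₀/2) 1 with hδdef
  have hδpos : 0 < δ := by positivity
  have hδ1 : δ ≤ 1 := min_le_right _ _
  have hmod : ∀ u v : ℝ, u ∈ Icc (0:ℝ) T' → v ∈ Icc (0:ℝ) T' → |u - v| ≤ δ →
      |g u - g v| < b - a := by
    intro u v hu hv huv
    have : dist u v < δ₀ := by
      rw [Real.dist_eq]
      calc |u - v| ≤ δ := huv
      _ ≤ δ₀/2 := min_le_left _ _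
      _ < δ₀ := by linarith
    have := hδ u hu v hv this
    rwa [Real.dist_eq] at this
  -- main step estimate
  have key : ∀ n, min ((seqSt a b g n).s + δ) T' ≤ (seqSt a b g (n+2)).s := by
    intro n
    set st := seqSt a b g n with hst
    have hst1 : seqSt a b g (n+1) = stepSt a b g st := seqSt_succ a b g n
    have hst2 : seqSt a b g (n+2) = stepSt a b g (seqSt a b g (n+1)) := seqSt_succ a b g (n+1)
    by_cases hf1 : (stepSt a b g st).low = st.low
    · -- no flip at step n
      have h1 : (seqSt a b g (n+1)).s = st.s + 1 := by rw [hst1]; exact step_nonflip hg hf1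
      have h2 : (seqSt a b g (n+1)).s ≤ (seqSt a b g (n+2)).s := seq_s_mono a b g (by norm_num)
      refine le_trans (min_le_left _ _) ?_
      rw [h1] at h2; linarith
    · by_cases hf2 : (stepSt a b g (seqSt a b g (n+1))).low = (seqSt a b g (n+1)).low
      · -- no flip at step n+1
        have h1 : (seqSt a b g (n+2)).s = (seqSt a b g (n+1)).s + 1 := by
          rw [hst2]; exact step_nonflip hg hf2
        have h2 : st.s ≤ (seqSt a b g (n+1)).s := by
          rw [hst1]; exact step_s_ge a b g st
        refine le_trans (min_le_left _ _) ?_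
        rw [h1]; linarith
      · -- flips at both n and n+1
        have hstart : ((seqSt a b g (n+1)).low = true ∧ (seqSt a b g (n+1)).x = a) ∨
            ((seqSt a b g (n+1)).low = false ∧ (seqSt a b g (n+1)).x = b) := by
          cases hc : (seqSt a b g (n+1)).low
          · refine Or.inr ⟨rfl, ?_⟩
            rw [hst1] at hc ⊢
            have hl : st.low = true := by
              cases hsl : st.low
              · exact absurd (by rw [hc, hsl]) hf1
              · rfl
            exact step_flip_low hl (by rw [hc, hl]; simp)
          · refine Or.inl ⟨rfl, ?_⟩
            rw [hst1] at hc ⊢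
            have hl : st.low = false := by
              cases hsl : st.low
              · rfl
              · exact absurd (by rw [hc, hsl]) hf1
            exact step_flip_up hl (by rw [hc, hl]; simp)
        obtain ⟨p, hp, hpe⟩ := step_osc hab hg hstart hf2
        rw [← hst2] at hp hpe
        rcases le_total T' ((seqSt a b g (n+2)).s) with hc | hc
        · exact le_trans (min_le_right _ _) hc
        · have h0p : 0 ≤ p := le_trans (seq_s_nonneg hab hg hg0 (n+1)) hp.1
          have hS2mem : (seqSt a b g (n+2)).s ∈ Icc (0:ℝ) T' :=
            ⟨seq_s_nonneg hab hg hg0 (n+2), hc⟩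
          have hpmem : p ∈ Icc (0:ℝ) T' := ⟨h0p, le_trans hp.2 hc⟩
          have hgap : ¬ |(seqSt a b g (n+2)).s - p| ≤ δ := fun hcon =>
            absurd (hmod _ _ hS2mem hpmem hcon) (by rw [hpe]; exact lt_irrefl _)
          push_neg at hgap
          rw [abs_of_nonneg (sub_nonneg.2 hp.2)] at hgap
          have h2 : st.s ≤ (seqSt a b g (n+1)).s := by
            rw [hst1]; exact step_s_ge a b g st
          refine le_trans (min_le_left _ _) ?_
          have := hp.1
          linarith
  -- iterate
  have iter : ∀ k : ℕ, min ((k : ℝ) * δ) T' ≤ (seqSt a b g (2*k)).s := by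
    intro k
    induction k with
    | zero =>
      have h0 : (0:ℝ) ≤ T' := le_max_right T 0
      simp only [Nat.cast_zero, zero_mul, Nat.mul_zero]
      rw [min_eq_left h0]
      exact seq_s_nonneg hab hg hg0 0
    | succ k ih =>
      have h1 := key (2*k)
      have h2 : 2*(k+1) = 2*k+2 := by ring
      rw [h2]
      push_cast
      rcases min_cases ((seqSt a b g (2*k)).s + δ) T' with ⟨he, _⟩ | ⟨he, _⟩
      · rw [he] at h1
        rcases min_cases ((k:ℝ)*δ) T' with ⟨he2, _⟩ | ⟨he2, hle2⟩
        · rw [he2] at ih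
          refine le_trans (min_le_left _ _) ?_
          have h3 : ((k:ℝ)+1)*δ = (k:ℝ)*δ + δ := by ring
          linarith
        · rw [he2] at ih
          refine le_trans (min_le_right _ _) ?_
          linarith
      · rw [he] at h1
        exact le_trans (min_le_right _ _) h1
  obtain ⟨k, hk⟩ := exists_nat_ge (T' / δ)
  refine ⟨2*k, le_trans (le_trans (le_max_left T 0) ?_) (iter k)⟩
  have : T' ≤ (k:ℝ) * δ := by
    rw [div_le_iff₀ hδpos] at hk
    linarith
  exact le_min this (le_refl T')

lemma seq_s_tendsto (hab : a < b) (hg : Continuous g) (hg0 : g 0 ∈ Icc a b) :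
    Tendsto (fun n => (seqSt a b g n).s) atTop atTop := by
  rw [tendsto_atTop]
  intro T
  obtain ⟨n, hn⟩ := exists_seq_s_ge hab hg hg0 T
  exact Filter.eventually_atTop.2 ⟨n, fun m hm => le_trans hn (seq_s_mono a b g hm)⟩

end Machine3
/-! ### Gluing the phases -/

section GlueSec

variable {a b : ℝ} {g : ℝ → ℝ}

lemma seq_s_zero (a b : ℝ) (g : ℝ → ℝ) : (seqSt a b g 0).s = 0 := rfl

lemma idx_exists (hab : a < b) (hg : Continuous g) (hg0 : g 0 ∈ Icc a b) (t : ℝ) :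
    ∃ n, t < (seqSt a b g (n+1)).s := by
  obtain ⟨n, hn⟩ := exists_seq_s_ge hab hg hg0 (t+1)
  have := seq_s_mono a b g (Nat.le_succ n)
  exact ⟨n, by simp only at this; linarith⟩

open Classical in
def idxF (hab : a < b) (hg : Continuous g) (hg0 : g 0 ∈ Icc a b) (t : ℝ) : ℕ :=
  Nat.find (idx_exists hab hg hg0 t)

lemma idx_lt (hab : a < b) (hg : Continuous g) (hg0 : g 0 ∈ Icc a b) (t : ℝ) :
    t < (seqSt a b g (idxF hab hg hg0 t + 1)).s := Nat.find_spec (idx_exists hab hg hg0 t)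

open Classical in
lemma idx_min (hab : a < b) (hg : Continuous g) (hg0 : g 0 ∈ Icc a b) {t : ℝ} {m : ℕ}
    (hm : m < idxF hab hg hg0 t) : (seqSt a b g (m+1)).s ≤ t :=
  not_lt.1 (Nat.find_min (idx_exists hab hg hg0 t) hm)

open Classical in
lemma idx_le' (hab : a < b) (hg : Continuous g) (hg0 : g 0 ∈ Icc a b) {t : ℝ} {m : ℕ}
    (hm : t < (seqSt a b g (m+1)).s) : idxF hab hg hg0 t ≤ m :=
  Nat.find_min' (idx_exists hab hg hg0 t) hm

lemma idx_le (hab : a < b) (hg : Continuous g) (hg0 : g 0 ∈ Icc a b) {t : ℝ} (ht : 0 ≤ t) :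
    (seqSt a b g (idxF hab hg hg0 t)).s ≤ t := by
  cases h : idxF hab hg hg0 t with
  | zero => rw [seq_s_zero]; exact ht
  | succ m => exact idx_min hab hg hg0 (h ▸ Nat.lt_succ_self m)

def glueF (hab : a < b) (hg : Continuous g) (hg0 : g 0 ∈ Icc a b)
    (F : RSt → ℝ → ℝ) (t : ℝ) : ℝ := F (seqSt a b g (idxF hab hg hg0 t)) t

variable (hab : a < b) (hg : Continuous g) (hg0 : g 0 ∈ Icc a b) {F : RSt → ℝ → ℝ}

/-- Consistency: on `[S n, S (n+1)]`, the glued function agrees with the `n`-th segment. -/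
lemma glue_eq
    (hjun : ∀ n, F (seqSt a b g (n+1)) ((seqSt a b g (n+1)).s)
      = F (seqSt a b g n) ((seqSt a b g (n+1)).s))
    {n : ℕ} {t : ℝ} (h1 : (seqSt a b g n).s ≤ t) (h2 : t ≤ (seqSt a b g (n+1)).s) :
    glueF hab hg hg0 F t = F (seqSt a b g n) t := by
  set k := idxF hab hg hg0 t with hk
  have hkt : t < (seqSt a b g (k+1)).s := idx_lt hab hg hg0 t
  have hkn : n ≤ k := by
    by_contra hcon
    push_neg at hcon
    have := seq_s_mono a b g (Nat.succ_le_of_lt hcon)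
    simp only at this
    linarith
  have hSk : k ≥ n+1 → (seqSt a b g k).s ≤ t := by
    intro hij
    cases hkk : k with
    | zero => omega
    | succ m =>
      exact idx_min hab hg hg0
        (show m < idxF hab hg hg0 t by rw [← hk, hkk]; exact Nat.lt_succ_self m)
  have hSj : ∀ j, n+1 ≤ j → j ≤ k → (seqSt a b g j).s = t := by
    intro j hj1 hj2
    have hup : (seqSt a b g j).s ≤ t := le_trans (seq_s_mono a b g hj2) (hSk (le_trans hj1 hj2))
    have hdown : t ≤ (seqSt a b g j).s := le_trans h2 (seq_s_mono a b g hj1)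
    exact le_antisymm hup hdown
  have main : ∀ j, n ≤ j → j ≤ k → F (seqSt a b g j) t = F (seqSt a b g n) t := by
    intro j
    induction j with
    | zero =>
      intro h1' _
      have : n = 0 := Nat.le_zero.1 h1'
      rw [this]
    | succ m ihm =>
      intro h1' h2'
      rcases Nat.lt_or_ge n (m+1) with hlt | hge
      · have hn_m : n ≤ m := Nat.lt_succ_iff.1 hlt
        have hSm1 : (seqSt a b g (m+1)).s = t := hSj (m+1) hlt h2'
        have hj := hjun m
        rw [hSm1] at hj
        rw [hj]
        exact ihm hn_m (le_trans (Nat.le_succ m) h2')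
      · have : n = m+1 := le_antisymm h1' hge
        rw [this]
  exact main k hkn (le_refl k)

/-- Monotonicity of the glued function. -/
lemma glue_mono
    (hjun : ∀ n, F (seqSt a b g (n+1)) ((seqSt a b g (n+1)).s)
      = F (seqSt a b g n) ((seqSt a b g (n+1)).s))
    (hmono : ∀ n t t', (seqSt a b g n).s ≤ t → t ≤ t' →
      F (seqSt a b g n) t ≤ F (seqSt a b g n) t')
    {p q : ℝ} (hp : 0 ≤ p) (hpq : p ≤ q) :
    glueF hab hg hg0 F p ≤ glueF hab hg hg0 F q := by
  have aux_same : ∀ p q : ℝ, 0 ≤ p → p ≤ q →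
      idxF hab hg hg0 q ≤ idxF hab hg hg0 p → glueF hab hg hg0 F p ≤ glueF hab hg hg0 F q := by
    intro p q hp hpq hle
    have hmono_idx : idxF hab hg hg0 p ≤ idxF hab hg hg0 q :=
      idx_le' hab hg hg0 (lt_of_le_of_lt hpq (idx_lt hab hg hg0 q))
    have heq : idxF hab hg hg0 p = idxF hab hg hg0 q := le_antisymm hmono_idx hle
    have h3 : (seqSt a b g (idxF hab hg hg0 p)).s ≤ p := idx_le hab hg hg0 hp
    have h4 : glueF hab hg hg0 F q = F (seqSt a b g (idxF hab hg hg0 p)) q := by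
      refine glue_eq hab hg hg0 hjun (le_trans h3 hpq) ?_
      rw [heq]
      exact (idx_lt hab hg hg0 q).le
    rw [h4]
    exact hmono _ p q h3 hpq
  suffices H : ∀ m : ℕ, ∀ p q : ℝ, 0 ≤ p → p ≤ q →
      idxF hab hg hg0 q - idxF hab hg hg0 p ≤ m →
      glueF hab hg hg0 F p ≤ glueF hab hg hg0 F q by
    exact H _ p q hp hpq (le_refl _)
  intro m
  induction m with
  | zero =>
    intro p q hp hpq hm
    exact aux_same p q hp hpq (by omega)
  | succ m ihm =>
    intro p q hp hpq hm
    by_cases hcase : idxF hab hg hg0 q ≤ idxF hab hg hg0 p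
    · exact aux_same p q hp hpq hcase
    · push_neg at hcase
      set n := idxF hab hg hg0 p with hn
      set p' := (seqSt a b g (n+1)).s with hp'
      have hpp' : p ≤ p' := (idx_lt hab hg hg0 p).le
      have hp'q : p' ≤ q := by
        have h5 : (seqSt a b g (n+1)).s ≤ (seqSt a b g (idxF hab hg hg0 q)).s :=
          seq_s_mono a b g (Nat.succ_le_of_lt hcase)
        exact le_trans h5 (idx_le hab hg hg0 (le_trans hp hpq))
      have hstep1 : glueF hab hg hg0 F p ≤ glueF hab hg hg0 F p' := by
        have he : glueF hab hg hg0 F p' = F (seqSt a b g n) p' :=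
          glue_eq hab hg hg0 hjun (seq_s_mono a b g (Nat.le_succ n)) (le_refl _)
        rw [he]
        exact hmono n p p' (idx_le hab hg hg0 hp) hpp'
      have hidxp' : n+1 ≤ idxF hab hg hg0 p' := by
        by_contra hcon
        push_neg at hcon
        have h6 : (seqSt a b g (idxF hab hg hg0 p' + 1)).s ≤ (seqSt a b g (n+1)).s :=
          seq_s_mono a b g (Nat.succ_le_of_lt hcon)
        have h7 := idx_lt hab hg hg0 p'
        rw [← hp'] at h6
        linarith
      refine le_trans hstep1 (ihm p' q (le_trans hp hpp') hp'q ?_)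
      omega

/-- Constancy of the glued function over predicates. -/
lemma glue_compl {Pr : ℝ → Prop}
    (hjun : ∀ n, F (seqSt a b g (n+1)) ((seqSt a b g (n+1)).s)
      = F (seqSt a b g n) ((seqSt a b g (n+1)).s))
    (hcompl : ∀ n p q, (seqSt a b g n).s ≤ p → p ≤ q → q ≤ (seqSt a b g (n+1)).s →
      (∀ r ∈ Icc p q, Pr r) → F (seqSt a b g n) q = F (seqSt a b g n) p)
    {p q : ℝ} (hp : 0 ≤ p) (hpq : p ≤ q) (hPr : ∀ r ∈ Icc p q, Pr r) :
    glueF hab hg hg0 F q = glueF hab hg hg0 F p := by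
  have aux_same : ∀ p q : ℝ, 0 ≤ p → p ≤ q → (∀ r ∈ Icc p q, Pr r) →
      idxF hab hg hg0 q ≤ idxF hab hg hg0 p →
      glueF hab hg hg0 F q = glueF hab hg hg0 F p := by
    intro p q hp hpq hPr hle
    have hmono_idx : idxF hab hg hg0 p ≤ idxF hab hg hg0 q :=
      idx_le' hab hg hg0 (lt_of_le_of_lt hpq (idx_lt hab hg hg0 q))
    have heq : idxF hab hg hg0 p = idxF hab hg hg0 q := le_antisymm hmono_idx hle
    have h3 : (seqSt a b g (idxF hab hg hg0 p)).s ≤ p := idx_le hab hg hg0 hp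
    have h4 : glueF hab hg hg0 F q = F (seqSt a b g (idxF hab hg hg0 p)) q := by
      refine glue_eq hab hg hg0 hjun (le_trans h3 hpq) ?_
      rw [heq]
      exact (idx_lt hab hg hg0 q).le
    rw [h4]
    have h5 : q ≤ (seqSt a b g (idxF hab hg hg0 p + 1)).s := by
      rw [heq]; exact (idx_lt hab hg hg0 q).le
    exact hcompl _ p q h3 hpq h5 hPr
  suffices H : ∀ m : ℕ, ∀ p q : ℝ, 0 ≤ p → p ≤ q → (∀ r ∈ Icc p q, Pr r) →
      idxF hab hg hg0 q - idxF hab hg hg0 p ≤ m →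
      glueF hab hg hg0 F q = glueF hab hg hg0 F p by
    exact H _ p q hp hpq hPr (le_refl _)
  intro m
  induction m with
  | zero =>
    intro p q hp hpq hPr hm
    exact aux_same p q hp hpq hPr (by omega)
  | succ m ihm =>
    intro p q hp hpq hPr hm
    by_cases hcase : idxF hab hg hg0 q ≤ idxF hab hg hg0 p
    · exact aux_same p q hp hpq hPr hcase
    · push_neg at hcase
      set n := idxF hab hg hg0 p with hn
      set p' := (seqSt a b g (n+1)).s with hp'
      have hpp' : p ≤ p' := (idx_lt hab hg hg0 p).le
      have hp'q : p' ≤ q := by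
        have h5 : (seqSt a b g (n+1)).s ≤ (seqSt a b g (idxF hab hg hg0 q)).s :=
          seq_s_mono a b g (Nat.succ_le_of_lt hcase)
        exact le_trans h5 (idx_le hab hg hg0 (le_trans hp hpq))
      have hstep1 : glueF hab hg hg0 F p' = glueF hab hg hg0 F p := by
        have he : glueF hab hg hg0 F p' = F (seqSt a b g n) p' :=
          glue_eq hab hg hg0 hjun (seq_s_mono a b g (Nat.le_succ n)) (le_refl _)
        rw [he]
        exact hcompl n p p' (idx_le hab hg hg0 hp) hpp' (le_refl _)
          (fun r hr => hPr r ⟨hr.1, le_trans hr.2 hp'q⟩)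
      have hidxp' : n+1 ≤ idxF hab hg hg0 p' := by
        by_contra hcon
        push_neg at hcon
        have h6 : (seqSt a b g (idxF hab hg hg0 p' + 1)).s ≤ (seqSt a b g (n+1)).s :=
          seq_s_mono a b g (Nat.succ_le_of_lt hcon)
        have h7 := idx_lt hab hg hg0 p'
        rw [← hp'] at h6
        linarith
      have hstep2 : glueF hab hg hg0 F q = glueF hab hg hg0 F p' := by
        refine ihm p' q (le_trans hp hpp') hp'q
          (fun r hr => hPr r ⟨le_trans hpp' hr.1, hr.2⟩) ?_
        omega
      rw [hstep2, hstep1]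

include hab hg hg0 in
lemma exists_left_seg {t : ℝ} (ht : 0 < t) :
    ∃ n, (seqSt a b g n).s < t ∧ t ≤ (seqSt a b g (n+1)).s := by
  set k := idxF hab hg hg0 t with hk
  rcases lt_or_eq_of_le (idx_le hab hg hg0 ht.le) with h | h
  · exact ⟨k, h, (idx_lt hab hg hg0 t).le⟩
  · have hex : ∃ j, (seqSt a b g j).s = t := ⟨k, h⟩
    classical
    set j := Nat.find hex with hj
    have hjs : (seqSt a b g j).s = t := Nat.find_spec hex
    have hj0 : j ≠ 0 := by
      intro h0
      rw [h0, seq_s_zero] at hjs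
      linarith
    obtain ⟨m, hm⟩ := Nat.exists_eq_succ_of_ne_zero hj0
    rw [Nat.succ_eq_add_one] at hm
    refine ⟨m, ?_, ?_⟩
    · have h1 : (seqSt a b g m).s ≤ t := by
        rw [← hjs, hm]
        exact seq_s_mono a b g (Nat.le_succ m)
      rcases lt_or_eq_of_le h1 with h2 | h2
      · exact h2
      · exact absurd h2 (Nat.find_min hex (show m < Nat.find hex by rw [← hj]; omega))
    · rw [← hm, hjs]

/-- Continuity of the glued function on `[0, ∞)`. -/
lemma glue_contOn
    (hjun : ∀ n, F (seqSt a b g (n+1)) ((seqSt a b g (n+1)).s)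
      = F (seqSt a b g n) ((seqSt a b g (n+1)).s))
    (hcont : ∀ n, ContinuousOn (F (seqSt a b g n)) (Ici (seqSt a b g n).s)) :
    ContinuousOn (glueF hab hg hg0 F) (Ici 0) := by
  intro t ht
  rw [mem_Ici] at ht
  -- right continuity
  have hR : ContinuousWithinAt (glueF hab hg hg0 F) (Ici t) t := by
    set n := idxF hab hg hg0 t with hn
    have h1 : (seqSt a b g n).s ≤ t := idx_le hab hg hg0 ht
    have h2 : t < (seqSt a b g (n+1)).s := idx_lt hab hg hg0 t
    have hc1 : ContinuousWithinAt (F (seqSt a b g n)) (Ico t (seqSt a b g (n+1)).s) t :=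
      ((hcont n) t h1).mono (fun r hr => le_trans h1 hr.1)
    have hc2 : ContinuousWithinAt (glueF hab hg hg0 F) (Ico t (seqSt a b g (n+1)).s) t := by
      refine hc1.congr (fun r hr => ?_) ?_
      · exact glue_eq hab hg hg0 hjun (le_trans h1 hr.1) hr.2.le
      · exact glue_eq hab hg hg0 hjun h1 h2.le
    rw [ContinuousWithinAt, nhdsWithin_Ico_eq_nhdsGE h2] at hc2
    exact hc2
  -- left continuity
  have hL : ContinuousWithinAt (glueF hab hg hg0 F) (Iic t ∩ Ici 0) t := by
    rcases eq_or_lt_of_le ht with h0 | h0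
    · have hsingle : Iic t ∩ Ici (0:ℝ) = {t} := by
        rw [← h0]
        ext r
        constructor
        · rintro ⟨hr1, hr2⟩
          exact le_antisymm hr1 hr2
        · rintro rfl
          exact ⟨mem_Iic.2 (le_refl _), mem_Ici.2 (le_refl _)⟩
      rw [hsingle]
      exact continuousWithinAt_singleton
    · obtain ⟨n, hn1, hn2⟩ := exists_left_seg hab hg hg0 h0
      have hc1 : ContinuousWithinAt (F (seqSt a b g n)) (Ioc (seqSt a b g n).s t) t :=
        ((hcont n) t hn1.le).mono (fun r hr => hr.1.le)
      have hc2 : ContinuousWithinAt (glueF hab hg hg0 F) (Ioc (seqSt a b g n).s t) t := by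
        refine hc1.congr (fun r hr => ?_) ?_
        · exact glue_eq hab hg hg0 hjun hr.1.le (le_trans hr.2 hn2)
        · exact glue_eq hab hg hg0 hjun hn1.le hn2
      rw [ContinuousWithinAt, nhdsWithin_Ioc_eq_nhdsLE hn1] at hc2
      exact hc2.mono_left (nhdsWithin_mono t inter_subset_left)
  have := hL.union hR
  refine this.mono (fun r hr => ?_)
  rcases le_total r t with h | h
  · exact Or.inl ⟨h, hr⟩
  · exact Or.inr h

end GlueSec
/-! ### The glued regulator and reflected path -/

section ConcreteSec

variable {a b : ℝ} {g : ℝ → ℝ} (hab : a < b) (hg : Continuous g) (hg0 : g 0 ∈ Icc a b)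

def ell0 (hab : a < b) (hg : Continuous g) (hg0 : g 0 ∈ Icc a b) : ℝ → ℝ :=
  glueF hab hg hg0 (segL a g)

def uu0 (hab : a < b) (hg : Continuous g) (hg0 : g 0 ∈ Icc a b) : ℝ → ℝ :=
  glueF hab hg hg0 (segU b g)

def xx0 (hab : a < b) (hg : Continuous g) (hg0 : g 0 ∈ Icc a b) : ℝ → ℝ :=
  glueF hab hg hg0 (segX a b g)

include hab hg hg0 in
lemma jun_L : ∀ n, segL a g (seqSt a b g (n+1)) ((seqSt a b g (n+1)).s)
    = segL a g (seqSt a b g n) ((seqSt a b g (n+1)).s) := by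
  intro n
  rw [segL_self (inv_seq hab hg hg0 (n+1)), seqSt_succ a b g n]
  exact junction_cl (seqSt a b g n)

include hab hg hg0 in
lemma jun_U : ∀ n, segU b g (seqSt a b g (n+1)) ((seqSt a b g (n+1)).s)
    = segU b g (seqSt a b g n) ((seqSt a b g (n+1)).s) := by
  intro n
  rw [segU_self (inv_seq hab hg hg0 (n+1)), seqSt_succ a b g n]
  exact junction_cu (seqSt a b g n)

include hab hg hg0 in
lemma jun_X : ∀ n, segX a b g (seqSt a b g (n+1)) ((seqSt a b g (n+1)).s)
    = segX a b g (seqSt a b g n) ((seqSt a b g (n+1)).s) := by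
  intro n
  rw [segX_self (inv_seq hab hg hg0 (n+1)), seqSt_succ a b g n]
  exact junction_x (seqSt a b g n)

lemma ell0_zero : ell0 hab hg hg0 0 = 0 := by
  have h := glue_eq hab hg hg0 (jun_L hab hg hg0) (n := 0) (t := 0)
    (by rw [seq_s_zero]) (by rw [← seq_s_zero a b g]; exact seq_s_mono a b g (Nat.zero_le 1))
  rw [ell0, h]
  have h2 : (seqSt a b g 0).s = 0 := seq_s_zero a b g
  rw [← h2, segL_self (inv_seq hab hg hg0 0)]
  rfl

lemma uu0_zero : uu0 hab hg hg0 0 = 0 := by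
  have h := glue_eq hab hg hg0 (jun_U hab hg hg0) (n := 0) (t := 0)
    (by rw [seq_s_zero]) (by rw [← seq_s_zero a b g]; exact seq_s_mono a b g (Nat.zero_le 1))
  rw [uu0, h]
  have h2 : (seqSt a b g 0).s = 0 := seq_s_zero a b g
  rw [← h2, segU_self (inv_seq hab hg hg0 0)]
  rfl

lemma ell0_mono {p q : ℝ} (hp : 0 ≤ p) (hpq : p ≤ q) :
    ell0 hab hg hg0 p ≤ ell0 hab hg hg0 q :=
  glue_mono hab hg hg0 (jun_L hab hg hg0)
    (fun _ _ _ h1 h2 => segL_mono hg h1 h2) hp hpq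

lemma uu0_mono {p q : ℝ} (hp : 0 ≤ p) (hpq : p ≤ q) :
    uu0 hab hg hg0 p ≤ uu0 hab hg hg0 q :=
  glue_mono hab hg hg0 (jun_U hab hg hg0)
    (fun _ _ _ h1 h2 => segU_mono hg h1 h2) hp hpq

lemma ell0_contOn : ContinuousOn (ell0 hab hg hg0) (Ici 0) :=
  glue_contOn hab hg hg0 (jun_L hab hg hg0) (fun _ => segL_contOn hg)

lemma uu0_contOn : ContinuousOn (uu0 hab hg hg0) (Ici 0) :=
  glue_contOn hab hg hg0 (jun_U hab hg hg0) (fun _ => segU_contOn hg)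

lemma xx0_contOn : ContinuousOn (xx0 hab hg hg0) (Ici 0) :=
  glue_contOn hab hg hg0 (jun_X hab hg hg0) (fun _ => segX_contOn hg)

lemma xx0_eq (t : ℝ) : xx0 hab hg hg0 t = g t + ell0 hab hg hg0 t - uu0 hab hg hg0 t :=
  segX_eq (inv_seq hab hg hg0 _)

lemma xx0_mem {t : ℝ} (ht : 0 ≤ t) :
    a ≤ xx0 hab hg hg0 t ∧ xx0 hab hg hg0 t ≤ b := by
  have h2 : t ≤ (stepSt a b g (seqSt a b g (idxF hab hg hg0 t))).s := by
    rw [← seqSt_succ]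
    exact (idx_lt hab hg hg0 t).le
  exact segX_mem hg (inv_seq hab hg hg0 _) (idx_le hab hg hg0 ht) h2

lemma ell0_compl {p q : ℝ} (hp : 0 ≤ p) (hpq : p ≤ q)
    (H : ∀ r ∈ Icc p q, a < xx0 hab hg hg0 r) :
    ell0 hab hg hg0 q = ell0 hab hg hg0 p := by
  refine glue_compl hab hg hg0 (Pr := fun r => a < xx0 hab hg hg0 r) (jun_L hab hg hg0)
    ?_ hp hpq H
  intro n p' q' h1 h2 h3 H'
  refine segL_compl (b := b) hg h1 h2 (fun r hr => ?_)
  have he : xx0 hab hg hg0 r = segX a b g (seqSt a b g n) r :=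
    glue_eq hab hg hg0 (jun_X hab hg hg0) (le_trans h1 hr.1) (le_trans hr.2 h3)
  rw [← he]
  exact H' r hr

lemma uu0_compl {p q : ℝ} (hp : 0 ≤ p) (hpq : p ≤ q)
    (H : ∀ r ∈ Icc p q, xx0 hab hg hg0 r < b) :
    uu0 hab hg hg0 q = uu0 hab hg hg0 p := by
  refine glue_compl hab hg hg0 (Pr := fun r => xx0 hab hg hg0 r < b) (jun_U hab hg hg0)
    ?_ hp hpq H
  intro n p' q' h1 h2 h3 H'
  refine segU_compl (a := a) hg h1 h2 (fun r hr => ?_)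
  have he : xx0 hab hg hg0 r = segX a b g (seqSt a b g n) r :=
    glue_eq hab hg hg0 (jun_X hab hg hg0) (le_trans h1 hr.1) (le_trans hr.2 h3)
  rw [← he]
  exact H' r hr

end ConcreteSec
/-! ### Stieltjes measure lemmas -/

lemma const_of_null (L : StieltjesFunction ℝ) {S : Set ℝ} (hS : L.measure S = 0) {p q : ℝ}
    (hpq : p ≤ q) (hsub : Ioc p q ⊆ S) : L q = L p := by
  have h1 : L.measure (Ioc p q) = 0 := measure_mono_null hsub hS
  rw [StieltjesFunction.measure_Ioc] at h1
  have h2 : L q - L p ≤ 0 := by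
    by_contra hcon
    push_neg at hcon
    rw [ENNReal.ofReal_eq_zero] at h1
    linarith
  exact le_antisymm (by linarith) (L.mono hpq)

lemma stieltjes_null_of_loc_const (L : StieltjesFunction ℝ) {S : Set ℝ}
    (h : ∀ x ∈ S, ∃ c d : ℝ, c < d ∧ x ∈ Ioo c d ∧ ∀ y ∈ Ioo c d, L y = L x) :
    L.measure S = 0 := by
  classical
  choose! c d hcd hmem hconst using h
  have hnull : ∀ x : S, L.measure (Ioo (c x.1) (d x.1)) = 0 := by
    rintro ⟨x, hx⟩
    have hK1 : Function.leftLim (L : ℝ → ℝ) (d x) = L x := by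
      refine leftLim_eq_of_tendsto ?_
      refine Tendsto.congr' ?_ tendsto_const_nhds
      filter_upwards [Ioo_mem_nhdsLT_of_mem (show d x ∈ Ioc (c x) (d x) from
        ⟨hcd x hx, le_refl _⟩)] with y hy
      exact (hconst x hx y hy).symm
    have hK2 : L (c x) = L x := by
      have ht1 : Tendsto (L : ℝ → ℝ) (𝓝[Ioo (c x) (d x)] (c x)) (𝓝 (L (c x))) :=
        (L.right_continuous (c x)).tendsto.mono_left
          (nhdsWithin_mono _ (fun y hy => hy.1.le))
      have hne : (𝓝[Ioo (c x) (d x)] (c x)).NeBot := by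
        rw [nhdsWithin_Ioo_eq_nhdsGT (hcd x hx)]
        exact nhdsGT_neBot (c x)
      have ht2 : Tendsto (L : ℝ → ℝ) (𝓝[Ioo (c x) (d x)] (c x)) (𝓝 (L x)) := by
        refine Tendsto.congr' ?_ tendsto_const_nhds
        filter_upwards [self_mem_nhdsWithin] with y hy
        exact (hconst x hx y hy).symm
      exact tendsto_nhds_unique ht1 ht2
    rw [StieltjesFunction.measure_Ioo, hK1, hK2, sub_self, ENNReal.ofReal_zero]
  have hsub : S ⊆ ⋃ x : S, Ioo (c x.1) (d x.1) :=
    fun x hx => mem_iUnion.2 ⟨⟨x, hx⟩, hmem x hx⟩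
  obtain ⟨T, hTc, hTeq⟩ := TopologicalSpace.isOpen_iUnion_countable
    (fun x : S => Ioo (c x.1) (d x.1)) (fun _ => isOpen_Ioo)
  have hsub2 : S ⊆ ⋃ x ∈ T, Ioo (c x.1) (d x.1) := by rw [hTeq]; exact hsub
  refine measure_mono_null hsub2 ?_
  exact (measure_biUnion_null_iff hTc).2 (fun x _ => hnull x)
/-! ### Uniqueness -/

lemma reg_le {a b : ℝ} (hab : a < b) {f l₁ u₁ l₂ u₂ : ℝ → ℝ}
    (hcl₁ : Continuous l₁) (hcu₁ : Continuous u₁) (hcl₂ : Continuous l₂) (hcu₂ : Continuous u₂)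
    (hmu₁ : Monotone u₁) (hml₂ : Monotone l₂)
    (hl₁0 : l₁ 0 = 0) (hu₁0 : u₁ 0 = 0) (hl₂0 : l₂ 0 = 0) (hu₂0 : u₂ 0 = 0)
    (hmem₁ : ∀ t, 0 ≤ t → f t + l₁ t - u₁ t ∈ Icc a b)
    (hmem₂ : ∀ t, 0 ≤ t → f t + l₂ t - u₂ t ∈ Icc a b)
    (hconstL₁ : ∀ p q : ℝ, 0 ≤ p → p ≤ q →
      (∀ r ∈ Ioc p q, a < f r + l₁ r - u₁ r) → l₁ q = l₁ p)
    (hconstU₂ : ∀ p q : ℝ, 0 ≤ p → p ≤ q →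
      (∀ r ∈ Ioc p q, f r + l₂ r - u₂ r < b) → u₂ q = u₂ p) :
    ∀ t, 0 ≤ t → f t + l₁ t - u₁ t ≤ f t + l₂ t - u₂ t := by
  intro t₀ ht₀
  by_contra hcon
  push_neg at hcon
  set D : ℝ → ℝ := fun t => (l₁ t - u₁ t) - (l₂ t - u₂ t) with hD
  have hDcont : Continuous D := by fun_prop
  have hDt₀ : 0 < D t₀ := by simp only [hD]; linarith
  have hD0 : D 0 = 0 := by simp only [hD]; rw [hl₁0, hu₁0, hl₂0, hu₂0]; ring
  set A := {s | s ∈ Icc 0 t₀ ∧ D s ≤ 0} with hA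
  have hAne : A.Nonempty := ⟨0, ⟨le_refl 0, ht₀⟩, le_of_eq hD0⟩
  have hAclosed : IsClosed A := by
    have : A = Icc 0 t₀ ∩ D ⁻¹' Iic 0 := by
      ext s; simp only [hA, mem_setOf_eq, mem_inter_iff, mem_preimage, mem_Iic]
    rw [this]
    exact isClosed_Icc.inter (isClosed_Iic.preimage hDcont)
  have hAbdd : BddAbove A := ⟨t₀, fun s hs => hs.1.2⟩
  set s' := sSup A with hs'
  have hs'A : s' ∈ A := hAclosed.csSup_mem hAne hAbdd
  have hs'0 : 0 ≤ s' := hs'A.1.1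
  have hs't₀ : s' ≤ t₀ := hs'A.1.2
  have hs'lt : s' < t₀ :=
    lt_of_le_of_ne hs't₀ (fun h => absurd (h ▸ hs'A.2) (not_le.2 hDt₀))
  have hpos : ∀ r ∈ Ioc s' t₀, 0 < D r := by
    intro r hr
    by_contra hc
    push_neg at hc
    have : r ∈ A := ⟨⟨le_trans hs'0 hr.1.le, hr.2⟩, hc⟩
    exact absurd (le_csSup hAbdd this) (not_le.2 hr.1)
  have hl₁c : l₁ t₀ = l₁ s' := by
    refine hconstL₁ s' t₀ hs'0 hs't₀ (fun r hr => ?_)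
    have h1 := (hmem₂ r (le_trans hs'0 hr.1.le)).1
    have h2 := hpos r hr
    simp only [hD] at h2
    linarith
  have hu₂c : u₂ t₀ = u₂ s' := by
    refine hconstU₂ s' t₀ hs'0 hs't₀ (fun r hr => ?_)
    have h1 := (hmem₁ r (le_trans hs'0 hr.1.le)).2
    have h2 := hpos r hr
    simp only [hD] at h2
    linarith
  have hu₁m : u₁ s' ≤ u₁ t₀ := hmu₁ hs't₀
  have hl₂m : l₂ s' ≤ l₂ t₀ := hml₂ hs't₀
  have hDs' : D s' ≤ 0 := hs'A.2
  have : D t₀ ≤ 0 := by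
    simp only [hD] at hDs' ⊢
    linarith
  linarith

lemma reg_l_eq {a b : ℝ} (hab : a < b) {f l₁ u₁ l₂ u₂ : ℝ → ℝ}
    (hf : ContinuousOn f (Ici 0))
    (hcl₁ : Continuous l₁) (hcu₁ : Continuous u₁) (hcl₂ : Continuous l₂) (hcu₂ : Continuous u₂)
    (hl₁0 : ∀ t, t ≤ 0 → l₁ t = 0) (hu₁0 : ∀ t, t ≤ 0 → u₁ t = 0)
    (hl₂0 : ∀ t, t ≤ 0 → l₂ t = 0) (hu₂0 : ∀ t, t ≤ 0 → u₂ t = 0)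
    (hX : ∀ t, 0 ≤ t → f t + l₁ t - u₁ t = f t + l₂ t - u₂ t)
    (hconstL₁ : ∀ p q : ℝ, 0 ≤ p → p ≤ q →
      (∀ r ∈ Ioc p q, a < f r + l₁ r - u₁ r) → l₁ q = l₁ p)
    (hconstL₂ : ∀ p q : ℝ, 0 ≤ p → p ≤ q →
      (∀ r ∈ Ioc p q, a < f r + l₂ r - u₂ r) → l₂ q = l₂ p)
    (hconstU₁ : ∀ p q : ℝ, 0 ≤ p → p ≤ q →
      (∀ r ∈ Ioc p q, f r + l₁ r - u₁ r < b) → u₁ q = u₁ p)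
    (hconstU₂ : ∀ p q : ℝ, 0 ≤ p → p ≤ q →
      (∀ r ∈ Ioc p q, f r + l₂ r - u₂ r < b) → u₂ q = u₂ p) :
    ∀ t, l₁ t = l₂ t := by
  by_contra hcon
  push_neg at hcon
  set E := {t : ℝ | l₁ t ≠ l₂ t} with hE
  have hEne : E.Nonempty := hcon
  have hEpos : ∀ t ∈ E, 0 < t := by
    intro t ht
    by_contra hc
    push_neg at hc
    exact ht (by rw [hl₁0 t hc, hl₂0 t hc])
  have hEbdd : BddBelow E := ⟨0, fun t ht => (hEpos t ht).le⟩
  set t' := sInf E with ht'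
  have ht'0 : 0 ≤ t' := le_csInf hEne (fun t ht => (hEpos t ht).le)
  have hbefore : ∀ t < t', l₁ t = l₂ t := by
    intro t ht
    by_contra hc
    exact absurd (csInf_le hEbdd hc) (not_le.2 ht)
  have hat : l₁ t' = l₂ t' := by
    rcases eq_or_lt_of_le ht'0 with h0 | h0
    · rw [hl₁0 t' h0.symm.le, hl₂0 t' h0.symm.le]
    · have h1 : Tendsto l₁ (𝓝[<] t') (𝓝 (l₁ t')) :=
        hcl₁.continuousAt.tendsto.mono_left nhdsWithin_le_nhds
      have h2 : Tendsto l₂ (𝓝[<] t') (𝓝 (l₂ t')) :=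
        hcl₂.continuousAt.tendsto.mono_left nhdsWithin_le_nhds
      have h3 : Tendsto l₁ (𝓝[<] t') (𝓝 (l₂ t')) := by
        refine Tendsto.congr' ?_ h2
        filter_upwards [self_mem_nhdsWithin] with y hy
        exact (hbefore y hy).symm
      exact tendsto_nhds_unique h1 h3
  have huat : u₁ t' = u₂ t' := by
    have := hX t' ht'0
    linarith
  -- continuity of X₁ at t' within [0, ∞)
  set X : ℝ → ℝ := fun t => f t + l₁ t - u₁ t with hXdef
  have hXcont : ContinuousOn X (Ici 0) := by
    rw [hXdef]
    exact (hf.add hcl₁.continuousOn).sub hcu₁.continuousOn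
  clear_value X
  have hXc : ContinuousWithinAt X (Ici 0) t' := hXcont t' ht'0
  have hε : (0:ℝ) < (b - a)/2 := by linarith
  obtain ⟨δ, hδ0, hδ⟩ := Metric.continuousWithinAt_iff.1 hXc ((b-a)/2) hε
  have hball : ∀ r ∈ Icc t' (t' + δ/2), |X r - X t'| < (b-a)/2 := by
    intro r hr
    have hr0 : r ∈ Ici (0:ℝ) := le_trans ht'0 hr.1
    have hd : dist r t' < δ := by
      rw [Real.dist_eq, abs_of_nonneg (by linarith [hr.1])]
      linarith [hr.2]
    have := hδ hr0 hd
    rwa [Real.dist_eq] at this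
  have hfinal : ∀ r ∈ Icc t' (t' + δ/2), l₁ r = l₂ r := by
    intro r hr
    rcases le_or_gt ((a+b)/2) (X t') with hcase | hcase
    · -- X stays above a : both l constant
      have habove : ∀ s ∈ Ioc t' r, a < X s := by
        intro s hs
        have := hball s ⟨hs.1.le, le_trans hs.2 hr.2⟩
        have := abs_lt.1 this
        linarith [this.1]
      have habove₂ : ∀ s ∈ Ioc t' r, a < f s + l₂ s - u₂ s := by
        intro s hs
        have h4 := hX s (le_trans ht'0 hs.1.le)
        have := habove s hs
        simp only [hXdef] at this
        linarith
      have e1 : l₁ r = l₁ t' := hconstL₁ t' r ht'0 hr.1 (fun s hs => by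
        have := habove s hs; simp only [hXdef] at this; exact this)
      have e2 : l₂ r = l₂ t' := hconstL₂ t' r ht'0 hr.1 habove₂
      rw [e1, e2, hat]
    · have hbelow : ∀ s ∈ Ioc t' r, X s < b := by
        intro s hs
        have := hball s ⟨hs.1.le, le_trans hs.2 hr.2⟩
        have := abs_lt.1 this
        linarith [this.2]
      have hbelow₂ : ∀ s ∈ Ioc t' r, f s + l₂ s - u₂ s < b := by
        intro s hs
        have h4 := hX s (le_trans ht'0 hs.1.le)
        have := hbelow s hs
        simp only [hXdef] at this
        linarith
      have e1 : u₁ r = u₁ t' := hconstU₁ t' r ht'0 hr.1 (fun s hs => by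
        have := hbelow s hs; simp only [hXdef] at this; exact this)
      have e2 : u₂ r = u₂ t' := hconstU₂ t' r ht'0 hr.1 hbelow₂
      have h5 := hX r (le_trans ht'0 hr.1)
      have h6 : u₁ r = u₂ r := by rw [e1, e2, huat]
      linarith
  obtain ⟨e, heE, he⟩ : ∃ e ∈ E, e < t' + δ/2 := by
    have hlt : sInf E < t' + δ/2 := by rw [← ht']; linarith
    exact (csInf_lt_iff hEbdd hEne).1 hlt
  have he1 : t' ≤ e := csInf_le hEbdd heE
  exact heE (hfinal e ⟨he1, he.le⟩)

end TSR13

namespace TSR13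

/-- Existence, in terms of a globally continuous driver `g`. -/
lemma exists_regulator_g {a b : ℝ} {g : ℝ → ℝ} (hab : a < b) (hg : Continuous g)
    (hg0 : g 0 ∈ Icc a b) :
    ∃ l u : ℝ → ℝ, Monotone l ∧ Continuous l ∧ Monotone u ∧ Continuous u ∧
      (∀ t, t ≤ 0 → l t = 0) ∧ (∀ t, t ≤ 0 → u t = 0) ∧
      (∀ t, 0 ≤ t → g t + l t - u t ∈ Icc a b) ∧
      (∀ p q : ℝ, 0 ≤ p → p ≤ q → (∀ r ∈ Icc p q, a < g r + l r - u r) → l q = l p) ∧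
      (∀ p q : ℝ, 0 ≤ p → p ≤ q → (∀ r ∈ Icc p q, g r + l r - u r < b) → u q = u p) := by
  have heL : ∀ t : ℝ, 0 ≤ t → ell0 hab hg hg0 (max t 0) = ell0 hab hg hg0 t :=
    fun t ht => by rw [max_eq_left ht]
  have heU : ∀ t : ℝ, 0 ≤ t → uu0 hab hg hg0 (max t 0) = uu0 hab hg hg0 t :=
    fun t ht => by rw [max_eq_left ht]
  refine ⟨fun t => ell0 hab hg hg0 (max t 0), fun t => uu0 hab hg hg0 (max t 0),
    ?_, ?_, ?_, ?_, ?_, ?_, ?_, ?_, ?_⟩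
  · intro p q hpq
    exact ell0_mono hab hg hg0 (le_max_right p 0) (max_le_max hpq le_rfl)
  · exact (ell0_contOn hab hg hg0).comp_continuous
      (continuous_id.max continuous_const) (fun x => le_max_right x 0)
  · intro p q hpq
    exact uu0_mono hab hg hg0 (le_max_right p 0) (max_le_max hpq le_rfl)
  · exact (uu0_contOn hab hg hg0).comp_continuous
      (continuous_id.max continuous_const) (fun x => le_max_right x 0)
  · intro t ht
    show ell0 hab hg hg0 (max t 0) = 0
    rw [max_eq_right ht]
    exact ell0_zero hab hg hg0
  · intro t ht
    show uu0 hab hg hg0 (max t 0) = 0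
    rw [max_eq_right ht]
    exact uu0_zero hab hg hg0
  · intro t ht
    simp only [heL t ht, heU t ht]
    have h1 := xx0_eq hab hg hg0 t
    have h2 := xx0_mem hab hg hg0 ht
    constructor
    · linarith [h2.1]
    · linarith [h2.2]
  · intro p q hp hpq H
    simp only [heL p hp, heL q (le_trans hp hpq)]
    refine ell0_compl hab hg hg0 hp hpq (fun r hr => ?_)
    have hr0 : 0 ≤ r := le_trans hp hr.1
    have h1 := xx0_eq hab hg hg0 r
    have h2 := H r hr
    simp only [heL r hr0, heU r hr0] at h2
    linarith
  · intro p q hp hpq H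
    simp only [heU p hp, heU q (le_trans hp hpq)]
    refine uu0_compl hab hg hg0 hp hpq (fun r hr => ?_)
    have hr0 : 0 ≤ r := le_trans hp hr.1
    have h1 := xx0_eq hab hg hg0 r
    have h2 := H r hr
    simp only [heL r hr0, heU r hr0] at h2
    linarith

lemma exists_regulator {a b : ℝ} (hab : a < b) {f : ℝ → ℝ}
    (hf : ContinuousOn f (Set.Ici 0)) (hf0 : f 0 ∈ Set.Icc a b) :
    ∃ l u : ℝ → ℝ, TwoSidedRegulator a b f l u := by
  classical
  have hgc : Continuous (fun t : ℝ => f (max t 0)) :=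
    hf.comp_continuous (continuous_id.max continuous_const) (fun x => le_max_right x 0)
  have hg0 : (fun t : ℝ => f (max t 0)) 0 ∈ Icc a b := by
    simpa using hf0
  obtain ⟨l, u, hml, hcl, hmu, hcu, hl0, hu0, hmem, hcompL, hcompU⟩ :=
    exists_regulator_g hab hgc hg0
  have hgf : ∀ t : ℝ, 0 ≤ t → f (max t 0) = f t := fun t ht => by rw [max_eq_left ht]
  have hXcont : Continuous (fun t : ℝ => f (max t 0) + l t - u t) :=
    (hgc.add hcl).sub hcu
  refine ⟨l, u, hml, hcl, hmu, hcu, hl0, hu0, ?_, ?_, ?_⟩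
  · intro t ht
    have := hmem t ht
    rwa [hgf t ht] at this
  · -- the lower regulator does not charge `{X > a}`
    apply stieltjes_null_of_loc_const
    rintro x ⟨hx0, hxa⟩
    have hxa' : a < f (max x 0) + l x - u x := by rwa [hgf x hx0]
    obtain ⟨δ, hδ0, hδ⟩ := Metric.continuousAt_iff.1 hXcont.continuousAt
      (f (max x 0) + l x - u x - a) (by linarith)
    have hIcc : ∀ r ∈ Icc (max 0 (x - δ/2)) (x + δ/2),
        a < f (max r 0) + l r - u r := by
      intro r hr
      have hd : dist r x < δ := by
        rw [Real.dist_eq, abs_lt]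
        constructor
        · have := le_trans (le_max_right 0 (x - δ/2)) hr.1
          linarith
        · linarith [hr.2]
      have := hδ hd
      rw [Real.dist_eq, abs_lt] at this
      linarith [this.1]
    have hP : 0 ≤ max 0 (x - δ/2) := le_max_left 0 _
    have hconst : ∀ y ∈ Icc (max 0 (x - δ/2)) (x + δ/2), l y = l (max 0 (x - δ/2)) :=
      fun y hy => hcompL (max 0 (x - δ/2)) y hP hy.1
        (fun r hr => hIcc r ⟨hr.1, le_trans hr.2 hy.2⟩)
    refine ⟨x - δ/2, x + δ/2, by linarith, ⟨by linarith, by linarith⟩, ?_⟩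
    intro y hy
    have hxmem : x ∈ Icc (max 0 (x - δ/2)) (x + δ/2) :=
      ⟨max_le hx0 (by linarith), by linarith⟩
    show l y = l x
    rcases le_or_gt 0 y with hy0 | hy0
    · have hymem : y ∈ Icc (max 0 (x - δ/2)) (x + δ/2) :=
        ⟨max_le hy0 hy.1.le, hy.2.le⟩
      rw [hconst y hymem, hconst x hxmem]
    · have hp0 : max 0 (x - δ/2) = 0 := max_eq_left (by linarith [hy.1])
      have h0mem : (0:ℝ) ∈ Icc (max 0 (x - δ/2)) (x + δ/2) := by
        rw [hp0]
        exact ⟨le_refl 0, by linarith⟩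
      rw [hl0 y hy0.le, hconst x hxmem, ← hconst 0 h0mem, hl0 0 le_rfl]
  · -- the upper regulator does not charge `{X < b}`
    apply stieltjes_null_of_loc_const
    rintro x ⟨hx0, hxb⟩
    have hxb' : f (max x 0) + l x - u x < b := by rwa [hgf x hx0]
    obtain ⟨δ, hδ0, hδ⟩ := Metric.continuousAt_iff.1 hXcont.continuousAt
      (b - (f (max x 0) + l x - u x)) (by linarith)
    have hIcc : ∀ r ∈ Icc (max 0 (x - δ/2)) (x + δ/2),
        f (max r 0) + l r - u r < b := by
      intro r hr
      have hd : dist r x < δ := by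
        rw [Real.dist_eq, abs_lt]
        constructor
        · have := le_trans (le_max_right 0 (x - δ/2)) hr.1
          linarith
        · linarith [hr.2]
      have := hδ hd
      rw [Real.dist_eq, abs_lt] at this
      linarith [this.2]
    have hP : 0 ≤ max 0 (x - δ/2) := le_max_left 0 _
    have hconst : ∀ y ∈ Icc (max 0 (x - δ/2)) (x + δ/2), u y = u (max 0 (x - δ/2)) :=
      fun y hy => hcompU (max 0 (x - δ/2)) y hP hy.1
        (fun r hr => hIcc r ⟨hr.1, le_trans hr.2 hy.2⟩)
    refine ⟨x - δ/2, x + δ/2, by linarith, ⟨by linarith, by linarith⟩, ?_⟩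
    intro y hy
    have hxmem : x ∈ Icc (max 0 (x - δ/2)) (x + δ/2) :=
      ⟨max_le hx0 (by linarith), by linarith⟩
    show u y = u x
    rcases le_or_gt 0 y with hy0 | hy0
    · have hymem : y ∈ Icc (max 0 (x - δ/2)) (x + δ/2) :=
        ⟨max_le hy0 hy.1.le, hy.2.le⟩
      rw [hconst y hymem, hconst x hxmem]
    · have hp0 : max 0 (x - δ/2) = 0 := max_eq_left (by linarith [hy.1])
      have h0mem : (0:ℝ) ∈ Icc (max 0 (x - δ/2)) (x + δ/2) := by
        rw [hp0]
        exact ⟨le_refl 0, by linarith⟩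
      rw [hu0 y hy0.le, hconst x hxmem, ← hconst 0 h0mem, hu0 0 le_rfl]

lemma regulator_unique {a b : ℝ} (hab : a < b) {f : ℝ → ℝ}
    (hf : ContinuousOn f (Set.Ici 0)) {l₁ u₁ l₂ u₂ : ℝ → ℝ}
    (h₁ : TwoSidedRegulator a b f l₁ u₁) (h₂ : TwoSidedRegulator a b f l₂ u₂) :
    l₁ = l₂ ∧ u₁ = u₂ := by
  obtain ⟨hml₁, hcl₁, hmu₁, hcu₁, hl₁0, hu₁0, hmem₁, hμl₁, hμu₁⟩ := h₁
  obtain ⟨hml₂, hcl₂, hmu₂, hcu₂, hl₂0, hu₂0, hmem₂, hμl₂, hμu₂⟩ := h₂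
  have hconstL₁ : ∀ p q : ℝ, 0 ≤ p → p ≤ q →
      (∀ r ∈ Ioc p q, a < f r + l₁ r - u₁ r) → l₁ q = l₁ p :=
    fun p q h0 hpq H => const_of_null _ hμl₁ hpq (fun r hr => ⟨le_trans h0 hr.1.le, H r hr⟩)
  have hconstL₂ : ∀ p q : ℝ, 0 ≤ p → p ≤ q →
      (∀ r ∈ Ioc p q, a < f r + l₂ r - u₂ r) → l₂ q = l₂ p :=
    fun p q h0 hpq H => const_of_null _ hμl₂ hpq (fun r hr => ⟨le_trans h0 hr.1.le, H r hr⟩)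
  have hconstU₁ : ∀ p q : ℝ, 0 ≤ p → p ≤ q →
      (∀ r ∈ Ioc p q, f r + l₁ r - u₁ r < b) → u₁ q = u₁ p :=
    fun p q h0 hpq H => const_of_null _ hμu₁ hpq (fun r hr => ⟨le_trans h0 hr.1.le, H r hr⟩)
  have hconstU₂ : ∀ p q : ℝ, 0 ≤ p → p ≤ q →
      (∀ r ∈ Ioc p q, f r + l₂ r - u₂ r < b) → u₂ q = u₂ p :=
    fun p q h0 hpq H => const_of_null _ hμu₂ hpq (fun r hr => ⟨le_trans h0 hr.1.le, H r hr⟩)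
  have hX : ∀ t, 0 ≤ t → f t + l₁ t - u₁ t = f t + l₂ t - u₂ t := by
    intro t ht
    have h1 := reg_le hab hcl₁ hcu₁ hcl₂ hcu₂ hmu₁ hml₂ (hl₁0 0 le_rfl) (hu₁0 0 le_rfl)
      (hl₂0 0 le_rfl) (hu₂0 0 le_rfl) hmem₁ hmem₂ hconstL₁ hconstU₂ t ht
    have h2 := reg_le hab hcl₂ hcu₂ hcl₁ hcu₁ hmu₂ hml₁ (hl₂0 0 le_rfl) (hu₂0 0 le_rfl)
      (hl₁0 0 le_rfl) (hu₁0 0 le_rfl) hmem₂ hmem₁ hconstL₂ hconstU₁ t ht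
    linarith
  have hleq : ∀ t, l₁ t = l₂ t :=
    reg_l_eq hab hf hcl₁ hcu₁ hcl₂ hcu₂ hl₁0 hu₁0 hl₂0 hu₂0 hX
      hconstL₁ hconstL₂ hconstU₁ hconstU₂
  constructor
  · funext t
    exact hleq t
  · funext t
    rcases le_total t 0 with ht | ht
    · rw [hu₁0 t ht, hu₂0 t ht]
    · have h3 := hX t ht
      have h4 := hleq t
      linarith

end TSR13


/-- **two-sided regulator.** Fix `a < b` and let `f : ℝ₊ → ℝ` be
continuous with `f(0) ∈ [a,b]`. There exists a unique pair `(l,u)` of continuous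
functions such that (i) `X(t) := f(t) + l(t) - u(t) ∈ [a,b]` for all `t ≥ 0`;
(ii) `l(0) = u(0) = 0`, `l` and `u` non-decreasing;
(iii) `∫₀^∞ 1_{X(t)>a} dl(t) = ∫₀^∞ 1_{X(t)<b} du(t) = 0`. -/
theorem two_sided_regulator (a b : ℝ) (hab : a < b) (f : ℝ → ℝ)
    (hf : ContinuousOn f (Set.Ici 0)) (hf0 : f 0 ∈ Set.Icc a b) :
    ∃! p : (ℝ → ℝ) × (ℝ → ℝ), TwoSidedRegulator a b f p.1 p.2 := by
  obtain ⟨l, u, h⟩ := TSR13.exists_regulator hab hf hf0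
  refine ⟨(l, u), h, ?_⟩
  rintro ⟨l', u'⟩ h'
  obtain ⟨h1, h2⟩ := TSR13.regulator_unique hab hf h' h
  exact Prod.ext h1 h2


end
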